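/- arXiv:1208.2288 — 10 statements merged into one kernel-verified Lean document; each statement's English description precedes it below -/
import Mathlib

section
/- Every matrix polynomial $q \in \mathbb{C}^{a\times b}[z_1,\ldots,z_d]$ of total degree $t$ admits a factorization $q(z) = C_0 L_1(z) C_1 L_2(z) \cdots C_{t-1} L_t(z) C_t$, where each $C_i$ is a constant complex matrix of appropriate size and each $L_i(z)$ is a diagonal matrix whose diagonal entries all lie in $\{1, z_1, \ldots, z_d\}$. -/
open Matrix MvPolynomial

/-- product of the first `t` letters of a word, missing letters count as `1`. -/
private lemma word_prod {d : ℕ} (z : Fin d → ℂ) (h : Option (Fin d) → ℂ)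
    (h1 : h none = 1) (h2 : ∀ v, h (some v) = z v) :
    ∀ (t : ℕ) (l : List (Fin d)), l.length ≤ t →
      (∏ r : Fin t, h (l[(r : ℕ)]?)) = (l.map z).prod := by
  intro t
  induction t with
  | zero =>
    intro l hl
    have : l = [] := List.length_eq_zero_iff.mp (Nat.le_zero.mp hl)
    subst this; simp
  | succ t ih =>
    intro l hl
    rw [Fin.prod_univ_succ]
    cases l with
    | nil =>
      have := ih [] (by simp)
      simp only [List.getElem?_nil] at this ⊢
      simp [h1, this]
    | cons x xs =>
      simp only [Fin.val_zero, List.getElem?_cons_zero, Fin.val_succ,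
        List.getElem?_cons_succ, h2]
      rw [ih xs (by simpa using hl)]
      simp

private lemma word_eval {d : ℕ} (z : Fin d → ℂ) (β : Fin d →₀ ℕ) :
    (((List.finRange d).flatMap (fun v => List.replicate (β v) v)).map z).prod
      = ∏ v, z v ^ β v := by
  simp [List.flatMap, List.map_flatten, List.map_map, Function.comp_def,
    List.prod_flatten, List.map_replicate, List.prod_replicate, Fin.prod_univ_def]

private lemma word_len {d : ℕ} (β : Fin d →₀ ℕ) :
    ((List.finRange d).flatMap (fun v => List.replicate (β v) v)).length
      = β.sum fun _ e => e := by
  rw [List.length_flatMap, Finsupp.sum_fintype _ _ (fun _ => rfl)]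
  simp [Function.comp_def, Fin.sum_univ_def]

private lemma diag_prod {N : ℕ} :
    ∀ (t : ℕ) (D : Fin (t + 1) → Fin N → ℂ) (B : Matrix (Fin N) (Fin N) ℂ),
      ((List.finRange (t + 1)).map (fun r => Matrix.diagonal (D r) *
          (if (r : ℕ) = t then B else 1))).prod
        = Matrix.diagonal (fun m => ∏ r, D r m) * B := by
  intro t
  induction t with
  | zero =>
    intro D B
    simp [List.finRange_succ, Matrix.diagonal_eq_diagonal_iff]
  | succ t ih =>
    intro D B
    rw [List.finRange_succ, List.map_cons, List.map_map, List.prod_cons]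
    have htail : (List.map ((fun r : Fin (t+2) => Matrix.diagonal (D r) *
        (if (r : ℕ) = t + 1 then B else 1)) ∘ Fin.succ) (List.finRange (t+1))).prod
        = Matrix.diagonal (fun m => ∏ r : Fin (t+1), D r.succ m) * B := by
      rw [← ih (fun r => D r.succ) B]
      congr 1
      apply List.map_congr_left
      intro r _
      simp [Function.comp, Fin.val_succ]
    rw [htail]
    have h0 : ((0 : Fin (t + 2)) : ℕ) ≠ t + 1 := by simp
    rw [if_neg h0, mul_one, ← Matrix.mul_assoc, Matrix.diagonal_mul_diagonal]
    simp [Fin.prod_univ_succ]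

private lemma key {d a b t : ℕ}
    (q : Matrix (Fin a) (Fin b) (MvPolynomial (Fin d) ℂ))
    (hq : ∀ i j, (q i j).totalDegree ≤ t)
    (h : (Fin d → ℂ) → Option (Fin d) → ℂ)
    (h1 : ∀ z, h z none = 1) (h2 : ∀ z v, h z (some v) = z v) :
    ∃ (N : ℕ) (ha : a ≤ N) (hb : b ≤ N)
      (C : Fin (t + 1) → Matrix (Fin N) (Fin N) ℂ)
      (ℓ : Fin t → Fin N → Option (Fin d)),
      ∀ (z : Fin d → ℂ) (i : Fin a) (j : Fin b),
        MvPolynomial.eval z (q i j) =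
          (C 0 * ((List.finRange t).map (fun r : Fin t =>
              Matrix.diagonal (fun m : Fin N => h z (ℓ r m)) * C r.succ)).prod)
            (Fin.castLE ha i) (Fin.castLE hb j) := by
  classical
  cases t with
  | zero =>
    refine ⟨max a b, le_max_left _ _, le_max_right _ _,
      fun _ => Matrix.of fun m n => if hm : (m : ℕ) < a then (if hn : (n : ℕ) < b then
        MvPolynomial.coeff 0 (q ⟨m, hm⟩ ⟨n, hn⟩) else 0) else 0,
      Fin.elim0, ?_⟩
    intro z i j
    simp only [List.finRange_zero, List.map_nil, List.prod_nil, mul_one]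
    have hi : ((Fin.castLE (le_max_left a b) i : Fin (max a b)) : ℕ) < a := by
      simpa using i.isLt
    have hj : ((Fin.castLE (le_max_right a b) j : Fin (max a b)) : ℕ) < b := by
      simpa using j.isLt
    rw [Matrix.of_apply, dif_pos hi, dif_pos hj]
    have hqij : ∀ β ∈ (q i j).support, β = 0 := by
      intro β hβ
      have ht : (q i j).totalDegree = 0 := Nat.le_zero.mp (hq i j)
      have := (MvPolynomial.totalDegree_eq_zero_iff _ _).mp ht β hβ
      ext v; exact this v
    have hsub : (q i j).support ⊆ {0} := fun β hβ =>
      Finset.mem_singleton.mpr (hqij β hβ)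
    rw [MvPolynomial.eval_eq', Finset.sum_subset hsub (by
      intro β _ hβ
      rw [MvPolynomial.notMem_support_iff.mp hβ, zero_mul])]
    simp [Fin.eta]
  | succ t =>
    -- the set of exponents appearing in `q`
    set S : Finset (Fin d →₀ ℕ) :=
      Finset.univ.biUnion (fun i : Fin a =>
        Finset.univ.biUnion (fun j : Fin b => (q i j).support)) with hS
    set E : Fin S.card ≃ {x // x ∈ S} := S.equivFin.symm with hE
    set α : Fin S.card → (Fin d →₀ ℕ) := fun k => (E k : Fin d →₀ ℕ) with hα
    set w : (Fin d →₀ ℕ) → List (Fin d) :=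
      fun β => (List.finRange d).flatMap (fun v => List.replicate (β v) v) with hw
    have hmemS : ∀ β ∈ S, (w β).length ≤ t + 1 := by
      intro β hβ
      rw [hS] at hβ
      obtain ⟨i, -, hβ⟩ := Finset.mem_biUnion.mp hβ
      obtain ⟨j, -, hβ⟩ := Finset.mem_biUnion.mp hβ
      calc (w β).length = β.sum fun _ e => e := word_len β
        _ ≤ (q i j).totalDegree := MvPolynomial.le_totalDegree hβ
        _ ≤ t + 1 := hq i j
    have hlen : ∀ k : Fin S.card, (w (α k)).length ≤ t + 1 :=
      fun k => hmemS (α k) (E k).2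
    set N : ℕ := max a b + S.card * b with hN
    set e : (Fin (max a b) ⊕ Fin S.card × Fin b) ≃ Fin N :=
      (Equiv.sumCongr (Equiv.refl _) finProdFinEquiv).trans finSumFinEquiv with he
    set ψ : Fin N → Option (Fin S.card × Fin b) :=
      fun m => Sum.elim (fun _ => none) some (e.symm m) with hψ
    have hψinl : ∀ x, ψ (e (Sum.inl x)) = none := by
      intro x; rw [hψ]; simp
    have hψinr : ∀ p, ψ (e (Sum.inr p)) = some p := by
      intro p; rw [hψ]; simp
    have haN : a ≤ N := le_trans (le_max_left a b) (Nat.le_add_right _ _)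
    have hbN : b ≤ N := le_trans (le_max_right a b) (Nat.le_add_right _ _)
    set A : Matrix (Fin N) (Fin N) ℂ := Matrix.of fun m n =>
      if hm : (m : ℕ) < a then
        (ψ n).elim 0 (fun p => MvPolynomial.coeff (α p.1) (q ⟨m, hm⟩ p.2))
      else 0 with hA
    set B : Matrix (Fin N) (Fin N) ℂ := Matrix.of fun m n =>
      (ψ m).elim 0 (fun p => if (n : ℕ) = (p.2 : ℕ) then 1 else 0) with hB
    set C : Fin (t + 2) → Matrix (Fin N) (Fin N) ℂ := fun s =>
      if (s : ℕ) = 0 then A else if (s : ℕ) = t + 1 then B else 1 with hC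
    set ℓ : Fin (t + 1) → Fin N → Option (Fin d) :=
      fun r m => (ψ m).elim none (fun p => (w (α p.1))[(r : ℕ)]?) with hℓ
    refine ⟨N, haN, hbN, C, ℓ, ?_⟩
    intro z i j
    have hC0 : C 0 = A := by rw [hC]; simp
    have hCsucc : ∀ r : Fin (t + 1), C r.succ = if (r : ℕ) = t then B else 1 := by
      intro r
      rw [hC]
      simp only [Fin.val_succ, Nat.succ_ne_zero, if_false, Nat.add_right_cancel_iff]
    rw [hC0]
    simp only [hCsucc]
    rw [diag_prod t (fun r m => h z (ℓ r m)) B]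
    rw [Matrix.mul_apply]
    simp only [Matrix.diagonal_mul]
    rw [← Equiv.sum_comp e, Fintype.sum_sum_type]
    have hz1 : ∀ x : Fin (max a b),
        A (Fin.castLE haN i) (e (Sum.inl x)) *
          ((∏ r, h z (ℓ r (e (Sum.inl x)))) * B (e (Sum.inl x)) (Fin.castLE hbN j)) = 0 := by
      intro x
      rw [hA]
      simp [hψinl x]
    rw [Finset.sum_eq_zero (fun x _ => hz1 x), zero_add]
    have hterm : ∀ p : Fin S.card × Fin b,
        A (Fin.castLE haN i) (e (Sum.inr p)) *
          ((∏ r, h z (ℓ r (e (Sum.inr p)))) * B (e (Sum.inr p)) (Fin.castLE hbN j)) =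
        MvPolynomial.coeff (α p.1) (q i p.2) *
          ((∏ v, z v ^ (α p.1) v) * if (j : ℕ) = (p.2 : ℕ) then 1 else 0) := by
      intro p
      have hAe : A (Fin.castLE haN i) (e (Sum.inr p)) =
          MvPolynomial.coeff (α p.1) (q i p.2) := by
        rw [hA]
        have hlt : ((Fin.castLE haN i : Fin N) : ℕ) < a := by simpa using i.isLt
        simp [hψinr p, hlt, Fin.eta]
      have hprod : (∏ r, h z (ℓ r (e (Sum.inr p)))) = ∏ v, z v ^ (α p.1) v := by
        have : ∀ r : Fin (t + 1), ℓ r (e (Sum.inr p)) = (w (α p.1))[(r : ℕ)]? := by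
          intro r; rw [hℓ]; simp [hψinr p]
        simp only [this]
        rw [word_prod z (h z) (h1 z) (h2 z) (t + 1) (w (α p.1)) (hlen p.1)]
        exact word_eval z (α p.1)
      have hBe : B (e (Sum.inr p)) (Fin.castLE hbN j) =
          if (j : ℕ) = (p.2 : ℕ) then 1 else 0 := by
        rw [hB]
        simp [hψinr p]
      rw [hAe, hprod, hBe]
    rw [Finset.sum_congr rfl (fun p _ => hterm p), Fintype.sum_prod_type]
    have hinner : ∀ k : Fin S.card,
        (∑ j0 : Fin b, MvPolynomial.coeff (α k) (q i j0) *
          ((∏ v, z v ^ (α k) v) * if (j : ℕ) = (j0 : ℕ) then 1 else 0)) =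
        MvPolynomial.coeff (α k) (q i j) * ∏ v, z v ^ (α k) v := by
      intro k
      simp only [Fin.val_eq_val, mul_ite, mul_one, mul_zero, ite_mul, zero_mul]
      rw [Finset.sum_ite_eq]
      simp
    rw [Finset.sum_congr rfl (fun k _ => hinner k)]
    -- now compare with the evaluation
    have hsub : (q i j).support ⊆ S := by
      intro β hβ
      rw [hS]
      exact Finset.mem_biUnion.mpr ⟨i, Finset.mem_univ _,
        Finset.mem_biUnion.mpr ⟨j, Finset.mem_univ _, hβ⟩⟩
    rw [MvPolynomial.eval_eq', Finset.sum_subset hsub (by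
      intro β _ hβ
      rw [MvPolynomial.notMem_support_iff.mp hβ, zero_mul])]
    rw [← Finset.sum_coe_sort S (fun β => MvPolynomial.coeff β (q i j) * ∏ v, z v ^ β v)]
    rw [← Equiv.sum_comp E (fun s : {x // x ∈ S} =>
      MvPolynomial.coeff (s : Fin d →₀ ℕ) (q i j) * ∏ v, z v ^ (s : Fin d →₀ ℕ) v)]

/-- Every matrix polynomial `q ∈ ℂ^{a×b}[z₁,…,z_d]` of total degree at most `t`
factors as `q(z) = C₀ L₁(z) C₁ L₂(z) ⋯ C_{t-1} L_t(z) C_t`, where the `Cᵢ` are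
constant complex matrices and each `Lᵢ(z)` is a diagonal matrix whose diagonal
entries lie in `{1, z₁, …, z_d}` (the diagonal entry is `1` when `ℓ r m = none`
and `z_v` when `ℓ r m = some v`).  The factors are realized as `N × N`
matrices, with `q(z)` appearing as the upper-left `a × b` corner of the
product; this amounts to padding the rectangular factors with zeros. -/
theorem matrix_polynomial_factorization {d a b t : ℕ}
    (q : Matrix (Fin a) (Fin b) (MvPolynomial (Fin d) ℂ))
    (hq : ∀ i j, (q i j).totalDegree ≤ t) :
    ∃ (N : ℕ) (ha : a ≤ N) (hb : b ≤ N)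
      (C : Fin (t + 1) → Matrix (Fin N) (Fin N) ℂ)
      (ℓ : Fin t → Fin N → Option (Fin d)),
      ∀ (z : Fin d → ℂ) (i : Fin a) (j : Fin b),
        MvPolynomial.eval z (q i j) =
          (C 0 * ((List.finRange t).map (fun r : Fin t =>
              Matrix.diagonal (fun m : Fin N =>
                match ℓ r m with
                  | none => (1 : ℂ)
                  | some v => z v) *
                C r.succ)).prod)
            (Fin.castLE ha i) (Fin.castLE hb j) := by
  obtain ⟨N, ha, hb, C, ℓ, hmain⟩ :=
    key q hq (fun z o => o.elim 1 z) (fun _ => rfl) (fun _ _ => rfl)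
  refine ⟨N, ha, hb, C, ℓ, fun z i j => ?_⟩
  have hm : ∀ (r : Fin t) (m : Fin N),
      (match ℓ r m with | none => (1 : ℂ) | some v => z v) = (ℓ r m).elim 1 z := by
    intro r m; cases ℓ r m <;> rfl
  simp only [hm]
  exact hmain z i j
end

section
/- Every polynomial $p \in \mathbb{C}[z_1, \ldots, z_d]$ with $p(0) = 1$ admits a determinantal representation $p(z) = \det(I_{|n|} - K Z_n)$ for some $n = (n_1,\ldots,n_d) \in \mathbb{N}_0^d$ and some complex matrix $K \in \mathbb{C}^{|n| \times |n|}$, where $Z_n = \bigoplus_{i=1}^d z_i I_{n_i}$ and $|n| = n_1 + \cdots + n_d$. -/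
open Matrix MvPolynomial

/-- Auxiliary: a labeled system realization of a polynomial. -/
private def RepAux {d : ℕ} (q : MvPolynomial (Fin d) ℂ) : Prop :=
  ∃ (ι : Type) (_ : Fintype ι) (_ : DecidableEq ι) (f : ι → Fin d)
    (A : Matrix ι ι ℂ) (B C : ι → ℂ) (W : (Fin d → ℂ) → Matrix ι ι ℂ),
    ∀ z : Fin d → ℂ,
      (1 - A * Matrix.diagonal (z ∘ f)) * W z = 1 ∧
      (1 - A * Matrix.diagonal (z ∘ f)).det = 1 ∧
      MvPolynomial.eval z q =
        MvPolynomial.eval (fun _ => 0) q +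
          C ⬝ᵥ (Matrix.diagonal (z ∘ f) * W z) *ᵥ B

private lemma fromBlocks_sub'' {l m α : Type*} [Sub α] (A A' : Matrix l l α)
    (B B' : Matrix l m α) (C C' : Matrix m l α) (D D' : Matrix m m α) :
    Matrix.fromBlocks A B C D - Matrix.fromBlocks A' B' C' D' =
      Matrix.fromBlocks (A - A') (B - B') (C - C') (D - D') := by
  ext x y
  rcases x with x | x <;> rcases y with y | y <;> simp [Matrix.fromBlocks]

private lemma repAux_all {d : ℕ} (q : MvPolynomial (Fin d) ℂ) : RepAux q := by
  induction q using MvPolynomial.induction_on with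
  | C a =>
    refine ⟨Empty, inferInstance, inferInstance, fun x => x.elim, 0, 0, 0, fun _ => 1, ?_⟩
    intro z
    refine ⟨?_, ?_, ?_⟩
    · ext x; exact x.elim
    · exact Matrix.det_isEmpty
    · simp
  | add p q hp hq =>
    obtain ⟨ι₁, i₁, j₁, f₁, A₁, B₁, C₁, W₁, h₁⟩ := hp
    obtain ⟨ι₂, i₂, j₂, f₂, A₂, B₂, C₂, W₂, h₂⟩ := hq
    refine ⟨ι₁ ⊕ ι₂, inferInstance, inferInstance, Sum.elim f₁ f₂,
      fromBlocks A₁ 0 0 A₂, Sum.elim B₁ B₂, Sum.elim C₁ C₂,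
      fun z => fromBlocks (W₁ z) 0 0 (W₂ z), ?_⟩
    intro z
    obtain ⟨h₁₁, h₁₂, h₁₃⟩ := h₁ z
    obtain ⟨h₂₁, h₂₂, h₂₃⟩ := h₂ z
    have hdiag : Matrix.diagonal (z ∘ Sum.elim f₁ f₂) =
        fromBlocks (Matrix.diagonal (z ∘ f₁)) 0 0 (Matrix.diagonal (z ∘ f₂)) := by
      rw [fromBlocks_diagonal]
      ext x; cases x <;> rfl
    have hkey : 1 - fromBlocks A₁ 0 0 A₂ * Matrix.diagonal (z ∘ Sum.elim f₁ f₂) =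
        fromBlocks (1 - A₁ * Matrix.diagonal (z ∘ f₁)) 0 0
          (1 - A₂ * Matrix.diagonal (z ∘ f₂)) := by
      rw [hdiag, fromBlocks_multiply, ← fromBlocks_one, fromBlocks_sub'']
      simp
    refine ⟨?_, ?_, ?_⟩
    · rw [hkey, fromBlocks_multiply]
      simp [h₁₁, h₂₁, fromBlocks_one]
    · rw [hkey, det_fromBlocks_zero₂₁, h₁₂, h₂₂, one_mul]
    · rw [hdiag, fromBlocks_multiply]
      simp only [Matrix.mul_zero, Matrix.zero_mul, add_zero, zero_add]
      rw [fromBlocks_mulVec]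
      simp only [Matrix.zero_mulVec, add_zero, zero_add, Sum.elim_comp_inl, Sum.elim_comp_inr]
      rw [sumElim_dotProduct_sumElim]
      simp only [map_add]
      rw [h₁₃, h₂₃]; ring
  | mul_X q i hq =>
    obtain ⟨ι, i₁, j₁, f, A, B, C, W, h⟩ := hq
    set D : ℂ := MvPolynomial.eval (fun _ => 0) q with hD
    set colB : Matrix ι Unit ℂ := Matrix.of fun u _ => B u with hcolB
    refine ⟨ι ⊕ Unit, inferInstance, inferInstance, Sum.elim f (fun _ => i),
      fromBlocks A colB 0 0, Sum.elim 0 (fun _ => 1), Sum.elim C (fun _ => D),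
      fun z => fromBlocks (W z) (z i • (W z * colB)) 0 1, ?_⟩
    intro z
    obtain ⟨h1, h2, h3⟩ := h z
    have hdiag : Matrix.diagonal (z ∘ Sum.elim f (fun _ => i)) =
        fromBlocks (Matrix.diagonal (z ∘ f)) 0 0 (Matrix.diagonal (fun _ : Unit => z i)) := by
      rw [fromBlocks_diagonal]
      ext x; cases x <;> rfl
    have hcolBd : colB * Matrix.diagonal (fun _ : Unit => z i) = z i • colB := by
      ext u v
      simp [mul_diagonal, mul_comm]
    have hkey : 1 - fromBlocks A colB 0 0 * Matrix.diagonal (z ∘ Sum.elim f (fun _ => i)) =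
        fromBlocks (1 - A * Matrix.diagonal (z ∘ f)) (-(z i • colB)) 0 1 := by
      rw [hdiag, fromBlocks_multiply, ← fromBlocks_one, fromBlocks_sub'']
      simp [hcolBd]
    refine ⟨?_, ?_, ?_⟩
    · rw [hkey, fromBlocks_multiply]
      simp only [Matrix.zero_mul, Matrix.mul_zero, Matrix.mul_one, add_zero, zero_add,
        Matrix.one_mul, h1]
      rw [← fromBlocks_one]
      rw [Matrix.mul_smul, ← Matrix.mul_assoc, h1, Matrix.one_mul]
      abel_nf
    · rw [hkey, det_fromBlocks_zero₂₁, h2, one_mul, det_one]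
    · rw [hdiag, fromBlocks_multiply]
      simp only [Matrix.mul_zero, Matrix.zero_mul, add_zero, zero_add, Matrix.mul_one]
      rw [fromBlocks_mulVec]
      simp only [Matrix.zero_mulVec, add_zero, zero_add, Matrix.mulVec_zero,
        Sum.elim_comp_inl, Sum.elim_comp_inr]
      rw [sumElim_dotProduct_sumElim]
      have hcol : ∀ M : Matrix ι ι ℂ, (M * colB) *ᵥ (fun _ : Unit => (1:ℂ)) = M *ᵥ B := by
        intro M
        ext u
        simp [Matrix.mulVec, dotProduct, Matrix.mul_apply, hcolB]
      have ha : (Matrix.diagonal (z ∘ f) * (z i • (W z * colB))) *ᵥ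
          (fun _ : Unit => (1:ℂ)) = z i • (Matrix.diagonal (z ∘ f) * W z) *ᵥ B := by
        rw [Matrix.mul_smul, Matrix.smul_mulVec, ← Matrix.mul_assoc, hcol]
      have hb : (Matrix.diagonal (fun _ : Unit => z i)) *ᵥ (fun _ : Unit => (1:ℂ)) =
          fun _ : Unit => z i := by
        ext u; simp [Matrix.mulVec, dotProduct]
      rw [ha, hb]
      have hev : MvPolynomial.eval z (q * X i) = MvPolynomial.eval z q * z i := by simp
      have hD2 : (fun _ : Unit => D) ⬝ᵥ (fun _ : Unit => z i) = D * z i := by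
        simp [dotProduct]
      rw [hev, h3, dotProduct_smul, hD2]
      simp only [_root_.map_mul, eval_X, smul_eq_mul]
      ring

/-- Every polynomial `p ∈ ℂ[z₁,…,z_d]` with `p(0) = 1` admits a determinantal
representation `p(z) = det (I - K Zₙ)` for some `n ∈ ℕ₀^d` and some complex
matrix `K`, where `Zₙ = ⊕ᵢ zᵢ I_{nᵢ}` is the diagonal matrix with `zᵢ`
repeated `nᵢ` times on the diagonal. -/
theorem exists_determinantal_representation {d : ℕ}
    (p : MvPolynomial (Fin d) ℂ) (hp : MvPolynomial.eval (fun _ => (0 : ℂ)) p = 1) :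
    ∃ (n : Fin d → ℕ) (K : Matrix ((i : Fin d) × Fin (n i)) ((i : Fin d) × Fin (n i)) ℂ),
      ∀ z : Fin d → ℂ,
        MvPolynomial.eval z p =
          (1 - K * Matrix.diagonal (fun x : (i : Fin d) × Fin (n i) => z x.1)).det := by
  obtain ⟨ι, iF, iD, f, A, B, C, W, h⟩ := repAux_all p
  -- Step 1: determinantal representation over ι
  have key : ∀ z : Fin d → ℂ,
      MvPolynomial.eval z p =
        (1 - (A - vecMulVec B C) * Matrix.diagonal (z ∘ f)).det := by
    intro z
    obtain ⟨h1, h2, h3⟩ := h z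
    set Z := Matrix.diagonal (z ∘ f) with hZ
    set C' : ι → ℂ := fun y => C y * z (f y) with hC'
    have hv : vecMulVec B C * Z = vecMulVec B C' := by
      ext x y
      rw [hZ]
      simp [vecMulVec_apply, mul_diagonal, hC', mul_assoc]
    have hWv : W z * vecMulVec B C' = vecMulVec (W z *ᵥ B) C' := by
      ext x y
      simp only [Matrix.mul_apply, vecMulVec_apply, Matrix.mulVec, dotProduct]
      rw [Finset.sum_mul]
      congr 1; ext k; ring
    have hfac : 1 - (A - vecMulVec B C) * Z =
        (1 - A * Z) * (1 + vecMulVec (W z *ᵥ B) C') := by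
      rw [Matrix.mul_add, Matrix.mul_one, ← hWv, ← Matrix.mul_assoc, h1, Matrix.one_mul,
        Matrix.sub_mul, ← hv]
      abel_nf
    have hZv : Z *ᵥ (W z *ᵥ B) = fun y => z (f y) * (W z *ᵥ B) y := by
      ext y
      rw [hZ]
      simp [Matrix.mulVec_diagonal]
    rw [hfac, det_mul, h2, one_mul, vecMulVec_eq Unit, det_one_add_replicateCol_mul_replicateRow]
    rw [h3, hp]
    congr 1
    rw [← Matrix.mulVec_mulVec, hZv]
    simp only [dotProduct, hC']
    congr 1; ext y; ring
  -- Step 2: reindex to the sigma type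
  classical
  set n : Fin d → ℕ := fun i => Fintype.card {x // f x = i} with hn
  let e : ((i : Fin d) × Fin (n i)) ≃ ι :=
    (Equiv.sigmaCongrRight (fun i => (Fintype.equivFin {x // f x = i}).symm)).trans
      (Equiv.sigmaFiberEquiv f)
  have hfe : ∀ x : (i : Fin d) × Fin (n i), f (e x) = x.1 := by
    rintro ⟨i, j⟩
    exact ((Fintype.equivFin {x // f x = i}).symm j).2
  refine ⟨n, (A - vecMulVec B C).submatrix e e, fun z => ?_⟩
  have hdiag : Matrix.diagonal (fun x : (i : Fin d) × Fin (n i) => z x.1) =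
      (Matrix.diagonal (z ∘ f)).submatrix e e := by
    have harg : (fun x : (i : Fin d) × Fin (n i) => z x.1) = (z ∘ f) ∘ e := by
      funext x
      exact (congrArg z (hfe x)).symm
    rw [submatrix_diagonal_equiv, harg]
  rw [hdiag, submatrix_mul_equiv, key z]
  have : (1 : Matrix ((i : Fin d) × Fin (n i)) ((i : Fin d) × Fin (n i)) ℂ) =
      (1 : Matrix ι ι ℂ).submatrix e e := by
    rw [submatrix_one_equiv]
  rw [this]
  have hsub : Matrix.submatrix (1 : Matrix ι ι ℂ) e e -
      ((A - vecMulVec B C) * Matrix.diagonal (z ∘ f)).submatrix e e =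
      (1 - (A - vecMulVec B C) * Matrix.diagonal (z ∘ f)).submatrix e e := rfl
  rw [hsub, Matrix.det_submatrix_equiv_self]
end

section
/- Let $G = \begin{bmatrix} G_{11} & G_{12} \\ G_{21} & G_{22} \end{bmatrix}$ be a contraction ($\|G\| \le 1$ in operator norm) with square diagonal blocks, such that $I - G_{11}$ is invertible. Then $K = G_{22} + G_{21}(I - G_{11})^{-1} G_{12}$ is a contraction. -/
set_option maxHeartbeats 1000000

open scoped Matrix.Norms.L2Operator
open Matrix

/-- If `G = [G₁₁ G₁₂; G₂₁ G₂₂]` is a contraction in the operator norm and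
`I - G₁₁` is invertible, then the closed-loop map
`K = G₂₂ + G₂₁ (I - G₁₁)⁻¹ G₁₂` is a contraction. -/
theorem closed_loop_contraction {m n : ℕ}
    (G11 : Matrix (Fin m) (Fin m) ℂ) (G12 : Matrix (Fin m) (Fin n) ℂ)
    (G21 : Matrix (Fin n) (Fin m) ℂ) (G22 : Matrix (Fin n) (Fin n) ℂ)
    (hG : ‖Matrix.fromBlocks G11 G12 G21 G22‖ ≤ 1)
    (hinv : IsUnit (1 - G11)) :
    ‖G22 + G21 * (1 - G11)⁻¹ * G12‖ ≤ 1 := by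
  set K := G22 + G21 * (1 - G11)⁻¹ * G12 with hK
  rw [Matrix.l2_opNorm_def]
  refine ContinuousLinearMap.opNorm_le_bound _ zero_le_one fun x => ?_
  rw [one_mul]
  have happ : ((Matrix.toEuclideanLin.trans LinearMap.toContinuousLinearMap K) x :
      EuclideanSpace ℂ (Fin n)) = (WithLp.equiv 2 (Fin n → ℂ)).symm
        (K *ᵥ (WithLp.equiv 2 (Fin n → ℂ) x)) := rfl
  set u : Fin n → ℂ := WithLp.equiv 2 _ x with hu
  set w : Fin m → ℂ := (1 - G11)⁻¹ *ᵥ (G12 *ᵥ u) with hw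
  have hinv' : (1 - G11) * (1 - G11)⁻¹ = 1 :=
    Matrix.mul_nonsing_inv _ ((Matrix.isUnit_iff_isUnit_det _).mp hinv)
  have hw' : G11 *ᵥ w + G12 *ᵥ u = w := by
    have h : (1 - G11) *ᵥ w = G12 *ᵥ u := by
      rw [hw, Matrix.mulVec_mulVec, hinv', Matrix.one_mulVec]
    rw [Matrix.sub_mulVec, Matrix.one_mulVec] at h
    rw [← h]; abel
  have hblock : (Matrix.fromBlocks G11 G12 G21 G22) *ᵥ (Sum.elim w u)
      = Sum.elim w (K *ᵥ u) := by
    rw [Matrix.fromBlocks_mulVec]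
    simp only [Sum.elim_comp_inl, Sum.elim_comp_inr]
    have hKu : K *ᵥ u = G22 *ᵥ u + G21 *ᵥ w := by
      rw [hK, Matrix.add_mulVec, ← Matrix.mulVec_mulVec, ← Matrix.mulVec_mulVec]
    rw [hw', hKu, add_comm (G21 *ᵥ w)]
  have hAv : ‖((WithLp.equiv 2 ((Fin m ⊕ Fin n) → ℂ)).symm
        ((Matrix.fromBlocks G11 G12 G21 G22) *ᵥ (Sum.elim w u)) :
      EuclideanSpace ℂ (Fin m ⊕ Fin n))‖ ≤ ‖Matrix.fromBlocks G11 G12 G21 G22‖ *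
      ‖((WithLp.equiv 2 ((Fin m ⊕ Fin n) → ℂ)).symm (Sum.elim w u) :
        EuclideanSpace ℂ (Fin m ⊕ Fin n))‖ := by
    rw [Matrix.l2_opNorm_def]
    exact ((Matrix.toEuclideanLin.trans LinearMap.toContinuousLinearMap)
      (Matrix.fromBlocks G11 G12 G21 G22)).le_opNorm
      ((WithLp.equiv 2 ((Fin m ⊕ Fin n) → ℂ)).symm (Sum.elim w u))
  rw [hblock] at hAv
  have hAv' : ‖((WithLp.equiv 2 _).symm (Sum.elim w (K *ᵥ u)) :
      EuclideanSpace ℂ (Fin m ⊕ Fin n))‖ ≤ ‖((WithLp.equiv 2 _).symm (Sum.elim w u) :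
      EuclideanSpace ℂ (Fin m ⊕ Fin n))‖ := by
    refine hAv.trans ?_
    have h0 : (0:ℝ) ≤ ‖((WithLp.equiv 2 _).symm (Sum.elim w u) :
        EuclideanSpace ℂ (Fin m ⊕ Fin n))‖ := norm_nonneg _
    nlinarith [hG]
  have hsq : ∀ (ι : Type) [Fintype ι] (y : EuclideanSpace ℂ ι), ‖y‖^2 = ∑ i, ‖y i‖^2 := by
    intro ι _ y
    rw [EuclideanSpace.norm_eq, Real.sq_sqrt]
    positivity
  have h1 : ∑ j, ‖(K *ᵥ u) j‖^2 ≤ ∑ j, ‖u j‖^2 := by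
    have h := pow_le_pow_left₀ (norm_nonneg _) hAv' 2
    rw [hsq, hsq] at h
    simp only [Fintype.sum_sum_type, WithLp.equiv_symm_apply, WithLp.ofLp_toLp, Sum.elim_inl,
      Sum.elim_inr] at h
    linarith [h]
  rw [happ]
  have h2 : ‖((WithLp.equiv 2 (Fin n → ℂ)).symm (K *ᵥ u) : EuclideanSpace ℂ (Fin n))‖^2
      ≤ ‖x‖^2 := by
    rw [hsq, hsq]
    simpa [hu] using h1
  nlinarith [h2, norm_nonneg x,
    norm_nonneg ((WithLp.equiv 2 (Fin n → ℂ)).symm (K *ᵥ u) : EuclideanSpace ℂ (Fin n))]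
end

section
/- Let $G = \begin{bmatrix} G_{11} & G_{12} \\ G_{21} & G_{22} \end{bmatrix}$ be a complex block matrix with square diagonal blocks, $\|G\| \le \beta$ for some $\beta > 1$, and suppose $G_{11}$ is nilpotent with $G_{11}^\kappa = 0$. Then $K = G_{22} + G_{21}(I - G_{11})^{-1} G_{12}$ satisfies $\|K\| \le \beta \sqrt{(\beta^2 - 1)(1 + \beta + \cdots + \beta^{\kappa-1})^2 + 1}$. -/
open Matrix
open scoped Matrix.Norms.L2Operator

private lemma normsq_elim {m n : ℕ} (v : Fin m → ℂ) (u : Fin n → ℂ) :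
    ‖(WithLp.equiv 2 ((Fin m ⊕ Fin n) → ℂ)).symm (Sum.elim v u)‖ ^ 2 =
      ‖(WithLp.equiv 2 (Fin m → ℂ)).symm v‖ ^ 2 +
        ‖(WithLp.equiv 2 (Fin n → ℂ)).symm u‖ ^ 2 := by
  rw [EuclideanSpace.norm_eq, EuclideanSpace.norm_eq, EuclideanSpace.norm_eq,
    Real.sq_sqrt (by positivity), Real.sq_sqrt (by positivity),
    Real.sq_sqrt (by positivity)]
  simp [Fintype.sum_sum_type]

private lemma opnorm_le_of_mulVec {p q : ℕ} (A : Matrix (Fin p) (Fin q) ℂ) {c : ℝ}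
    (hc : 0 ≤ c)
    (h : ∀ u : EuclideanSpace ℂ (Fin q),
      ‖(WithLp.equiv 2 (Fin p → ℂ)).symm (A *ᵥ (WithLp.equiv 2 (Fin q → ℂ) u))‖ ≤ c * ‖u‖) :
    ‖A‖ ≤ c := by
  rw [Matrix.l2_opNorm_def]
  exact ContinuousLinearMap.opNorm_le_bound _ hc fun u => h u

/-- If `G = [G₁₁ G₁₂; G₂₁ G₂₂]` satisfies `‖G‖ ≤ β` with `β > 1` and `G₁₁` is
nilpotent with `G₁₁ ^ κ = 0`, then `K = G₂₂ + G₂₁ (I - G₁₁)⁻¹ G₁₂` satisfies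
`‖K‖ ≤ β √((β² - 1)(1 + β + ⋯ + β^(κ-1))² + 1)`. -/
theorem closed_loop_norm_bound {m n : ℕ} (β : ℝ) (κ : ℕ)
    (G11 : Matrix (Fin m) (Fin m) ℂ) (G12 : Matrix (Fin m) (Fin n) ℂ)
    (G21 : Matrix (Fin n) (Fin m) ℂ) (G22 : Matrix (Fin n) (Fin n) ℂ)
    (hβ : 1 < β)
    (hG : ‖Matrix.fromBlocks G11 G12 G21 G22‖ ≤ β)
    (hnil : G11 ^ κ = 0) :
    ‖G22 + G21 * (1 - G11)⁻¹ * G12‖ ≤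
      β * Real.sqrt ((β ^ 2 - 1) * (∑ i ∈ Finset.range κ, β ^ i) ^ 2 + 1) := by
  set σ : ℝ := ∑ i ∈ Finset.range κ, β ^ i with hσdef
  have hβ0 : (0:ℝ) < β := lt_trans one_pos hβ
  have hσ0 : 0 ≤ σ := Finset.sum_nonneg fun i _ => by positivity
  have hb2 : (0:ℝ) ≤ β ^ 2 - 1 := by nlinarith
  set G : Matrix (Fin m ⊕ Fin n) (Fin m ⊕ Fin n) ℂ := Matrix.fromBlocks G11 G12 G21 G22
    with hGdef
  -- pointwise bound via the big matrix
  have key : ∀ (v : Fin m → ℂ) (u : Fin n → ℂ),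
      ‖(WithLp.equiv 2 ((Fin m ⊕ Fin n) → ℂ)).symm (G *ᵥ Sum.elim v u)‖ ≤
        β * ‖(WithLp.equiv 2 ((Fin m ⊕ Fin n) → ℂ)).symm (Sum.elim v u)‖ := by
    intro v u
    calc ‖(WithLp.equiv 2 ((Fin m ⊕ Fin n) → ℂ)).symm (G *ᵥ Sum.elim v u)‖
        ≤ ‖G‖ * ‖(WithLp.equiv 2 ((Fin m ⊕ Fin n) → ℂ)).symm (Sum.elim v u)‖ :=
          G.l2_opNorm_mulVec ((WithLp.equiv 2 ((Fin m ⊕ Fin n) → ℂ)).symm (Sum.elim v u))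
      _ ≤ β * ‖(WithLp.equiv 2 ((Fin m ⊕ Fin n) → ℂ)).symm (Sum.elim v u)‖ :=
          mul_le_mul_of_nonneg_right hG (norm_nonneg _)
  -- ‖G11 v‖ ≤ β ‖v‖
  have hG11v : ∀ v : Fin m → ℂ,
      ‖(WithLp.equiv 2 (Fin m → ℂ)).symm (G11 *ᵥ v)‖ ≤
        β * ‖(WithLp.equiv 2 (Fin m → ℂ)).symm v‖ := by
    intro v
    have h := key v 0
    rw [hGdef, Matrix.fromBlocks_mulVec] at h
    simp only [Sum.elim_comp_inl, Sum.elim_comp_inr, Matrix.mulVec_zero, add_zero] at h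
    have hsq := normsq_elim (G11 *ᵥ v) (G21 *ᵥ v)
    have hsq2 := normsq_elim v (0 : Fin n → ℂ)
    have h0 : ‖(WithLp.equiv 2 (Fin n → ℂ)).symm (0 : Fin n → ℂ)‖ = 0 := by simp
    have h2 : ‖(WithLp.equiv 2 (Fin m → ℂ)).symm (G11 *ᵥ v)‖ ^ 2 ≤
        (β * ‖(WithLp.equiv 2 (Fin m → ℂ)).symm v‖) ^ 2 := by
      have := pow_le_pow_left₀ (norm_nonneg _) h 2
      rw [mul_pow, hsq, hsq2, h0] at this
      nlinarith [sq_nonneg ‖(WithLp.equiv 2 (Fin n → ℂ)).symm (G21 *ᵥ v)‖]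
    exact (pow_le_pow_iff_left₀ (norm_nonneg _) (by positivity) two_ne_zero).mp h2
  -- ‖G12 u‖ ≤ β ‖u‖
  have hG12u : ∀ u : Fin n → ℂ,
      ‖(WithLp.equiv 2 (Fin m → ℂ)).symm (G12 *ᵥ u)‖ ≤
        β * ‖(WithLp.equiv 2 (Fin n → ℂ)).symm u‖ := by
    intro u
    have h := key 0 u
    rw [hGdef, Matrix.fromBlocks_mulVec] at h
    simp only [Sum.elim_comp_inl, Sum.elim_comp_inr, Matrix.mulVec_zero, zero_add] at h
    have hsq := normsq_elim (G12 *ᵥ u) (G22 *ᵥ u)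
    have hsq2 := normsq_elim (0 : Fin m → ℂ) u
    have h0 : ‖(WithLp.equiv 2 (Fin m → ℂ)).symm (0 : Fin m → ℂ)‖ = 0 := by simp
    have h2 : ‖(WithLp.equiv 2 (Fin m → ℂ)).symm (G12 *ᵥ u)‖ ^ 2 ≤
        (β * ‖(WithLp.equiv 2 (Fin n → ℂ)).symm u‖) ^ 2 := by
      have := pow_le_pow_left₀ (norm_nonneg _) h 2
      rw [mul_pow, hsq, hsq2, h0] at this
      nlinarith [sq_nonneg ‖(WithLp.equiv 2 (Fin n → ℂ)).symm (G22 *ᵥ u)‖]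
    exact (pow_le_pow_iff_left₀ (norm_nonneg _) (by positivity) two_ne_zero).mp h2
  have hG11 : ‖G11‖ ≤ β := opnorm_le_of_mulVec _ hβ0.le fun u => by
    simpa using hG11v (WithLp.equiv 2 (Fin m → ℂ) u)
  -- geometric sum is a right inverse of 1 - G11
  have hinv : (1 - G11) * ∑ i ∈ Finset.range κ, G11 ^ i = 1 := by
    have h := mul_geom_sum G11 κ
    rw [hnil, zero_sub] at h
    rw [show (1 : Matrix (Fin m) (Fin m) ℂ) - G11 = -(G11 - 1) from (neg_sub _ _).symm,
      neg_mul, h, neg_neg]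
  have hS : (1 - G11)⁻¹ = ∑ i ∈ Finset.range κ, G11 ^ i :=
    Matrix.inv_eq_right_inv hinv
  have hmul : (1 - G11) * (1 - G11)⁻¹ = 1 := by rw [hS]; exact hinv
  -- norm bound for the inverse
  have hpow : ∀ i : ℕ, ‖G11 ^ i‖ ≤ β ^ i := by
    intro i
    induction i with
    | zero =>
      rw [pow_zero, pow_zero]
      rw [Matrix.cstar_norm_def, _root_.map_one, ContinuousLinearMap.one_def]
      exact ContinuousLinearMap.norm_id_le
    | succ k ih =>
      rw [pow_succ, pow_succ]
      exact le_trans (Matrix.l2_opNorm_mul _ _)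
        (mul_le_mul ih hG11 (norm_nonneg _) (by positivity))
  have hSnorm : ‖(1 - G11)⁻¹‖ ≤ σ := by
    rw [hS]
    exact le_trans (norm_sum_le _ _) (Finset.sum_le_sum fun i _ => hpow i)
  -- main estimate
  set R : ℝ := Real.sqrt ((β ^ 2 - 1) * σ ^ 2 + 1) with hRdef
  have hR2 : R ^ 2 = (β ^ 2 - 1) * σ ^ 2 + 1 :=
    Real.sq_sqrt (by nlinarith [mul_nonneg hb2 (sq_nonneg σ)])
  have hR0 : 0 ≤ R := Real.sqrt_nonneg _
  apply opnorm_le_of_mulVec _ (by positivity)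
  intro u
  set uf : Fin n → ℂ := WithLp.equiv 2 (Fin n → ℂ) u with hufdef
  set x : Fin m → ℂ := (1 - G11)⁻¹ *ᵥ (G12 *ᵥ uf) with hxdef
  have hfix : G11 *ᵥ x + G12 *ᵥ uf = x := by
    have h1 : (1 - G11) *ᵥ x = G12 *ᵥ uf := by
      rw [hxdef, Matrix.mulVec_mulVec, hmul, Matrix.one_mulVec]
    rw [Matrix.sub_mulVec, Matrix.one_mulVec] at h1
    rw [← h1]; abel
  have hKu : (G22 + G21 * (1 - G11)⁻¹ * G12) *ᵥ uf = G21 *ᵥ x + G22 *ᵥ uf := by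
    rw [Matrix.add_mulVec, hxdef, Matrix.mulVec_mulVec, Matrix.mulVec_mulVec]
    exact add_comm _ _
  have hGw : G *ᵥ Sum.elim x uf =
      Sum.elim x ((G22 + G21 * (1 - G11)⁻¹ * G12) *ᵥ uf) := by
    rw [hGdef, Matrix.fromBlocks_mulVec]
    simp only [Sum.elim_comp_inl, Sum.elim_comp_inr]
    rw [hfix, hKu]
  -- abbreviations for the three norms
  set a : ℝ := ‖(WithLp.equiv 2 (Fin m → ℂ)).symm x‖ with hadef
  set b : ℝ := ‖u‖ with hbdef
  set c : ℝ := ‖(WithLp.equiv 2 (Fin n → ℂ)).symm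
      ((G22 + G21 * (1 - G11)⁻¹ * G12) *ᵥ uf)‖ with hcdef
  have ha0 : 0 ≤ a := norm_nonneg _
  have hb0 : 0 ≤ b := norm_nonneg _
  have hc0 : 0 ≤ c := norm_nonneg _
  have hub : ‖(WithLp.equiv 2 (Fin n → ℂ)).symm uf‖ = b := by
    rw [hufdef, hbdef, Equiv.symm_apply_apply]
  -- ‖x‖ ≤ σ β b
  have hx : a ≤ σ * (β * b) := by
    have h1 : a ≤ ‖(1 - G11)⁻¹‖ * ‖(WithLp.equiv 2 (Fin m → ℂ)).symm (G12 *ᵥ uf)‖ :=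
      (1 - G11)⁻¹.l2_opNorm_mulVec ((WithLp.equiv 2 (Fin m → ℂ)).symm (G12 *ᵥ uf))
    have h2 : ‖(WithLp.equiv 2 (Fin m → ℂ)).symm (G12 *ᵥ uf)‖ ≤ β * b := by
      have := hG12u uf; rwa [hub] at this
    calc a ≤ ‖(1 - G11)⁻¹‖ * ‖(WithLp.equiv 2 (Fin m → ℂ)).symm (G12 *ᵥ uf)‖ := h1
      _ ≤ σ * (β * b) := mul_le_mul hSnorm h2 (norm_nonneg _) hσ0
  -- combined inequality
  have hcomb : a ^ 2 + c ^ 2 ≤ β ^ 2 * (a ^ 2 + b ^ 2) := by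
    have h := key x uf
    rw [hGw] at h
    have h2 := pow_le_pow_left₀ (norm_nonneg _) h 2
    rw [mul_pow, normsq_elim, normsq_elim, hub] at h2
    exact h2
  -- finish
  have hgoal : c ^ 2 ≤ (β * R * b) ^ 2 := by
    have ha2 : a ^ 2 ≤ (σ * (β * b)) ^ 2 := pow_le_pow_left₀ ha0 hx 2
    have hexp : (β * R * b) ^ 2 = ((β ^ 2 - 1) * σ ^ 2 + 1) * (β ^ 2 * b ^ 2) := by
      rw [mul_pow, mul_pow, hR2]; ring
    nlinarith [mul_le_mul_of_nonneg_left ha2 hb2, hcomb, sq_nonneg b]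
  have := (pow_le_pow_iff_left₀ hc0 (by positivity) two_ne_zero).mp hgoal
  calc c ≤ β * R * b := this
    _ = β * R * ‖u‖ := by rw [hbdef]
end

section
/- Let $K$ be a contractive $N \times N$ complex matrix and let $Z$ be a diagonal matrix with entries in the open unit disk. Then $\det(Z - K^*) = \det(I - KZ) \cdot \det(-K^* + \sqrt{I - K^*K}\, Z (I - KZ)^{-1} \sqrt{I - KK^*})$. -/
open scoped Matrix Matrix.Norms.L2Operator ComplexOrder

/-- The positive semidefinite square root of a positive semidefinite matrix
(the definition removed from Mathlib, restored with its old meaning). -/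
noncomputable def Matrix.PosSemidef.sqrt {n 𝕜 : Type*} [Fintype n] [RCLike 𝕜] [DecidableEq n]
    {A : Matrix n n 𝕜} (hA : A.PosSemidef) : Matrix n n 𝕜 :=
  (hA.1.eigenvectorUnitary : Matrix n n 𝕜) *
    Matrix.diagonal ((↑) ∘ (fun x : ℝ => Real.sqrt x) ∘ hA.1.eigenvalues) *
    (star hA.1.eigenvectorUnitary : Matrix n n 𝕜)

open scoped MatrixOrder in
lemma Matrix.PosSemidef.eq_sqrt_of_sq_eq {n : Type*} [Fintype n] [DecidableEq n]
    {A B : Matrix n n ℂ} (hB : B.PosSemidef) (hA : A.PosSemidef)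
    (h : B ^ 2 = A) : B = hA.sqrt := by
  have e : hA.sqrt = CFC.sqrt A := by
    rw [CFC.sqrt_eq_cfc, cfc_nnreal_eq_real _ A hA.nonneg, hA.1.cfc_eq]
    simp only [Matrix.IsHermitian.cfc, Matrix.PosSemidef.sqrt, Unitary.conjStarAlgAut_apply]
    congr 3
    funext i
    simp [Real.coe_sqrt, Real.coe_toNNReal', hA.eigenvalues_nonneg i]
  rw [e]
  exact (CFC.sqrt_unique (by rw [← sq]; exact h) hB.nonneg).symm

namespace DetDiagAux

open Matrix Filter
open scoped ComplexOrder Topology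

variable {n : Type*} [Fintype n] [DecidableEq n]

lemma conj_diag_mul (V : Matrix n n ℂ) (hV : star V * V = 1) (f g : n → ℂ) :
    (V * diagonal f * star V) * (V * diagonal g * star V)
      = V * diagonal (fun i => f i * g i) * star V := by
  have h : diagonal f * (star V * V) * diagonal g = diagonal (fun i => f i * g i) := by
    rw [hV, mul_one, diagonal_mul_diagonal]
  calc (V * diagonal f * star V) * (V * diagonal g * star V)
      = V * (diagonal f * (star V * V) * diagonal g) * star V := by
        simp only [Matrix.mul_assoc]
    _ = V * diagonal (fun i => f i * g i) * star V := by rw [h]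

lemma conj_diag_det (V : Matrix n n ℂ) (hV : star V * V = 1) (f : n → ℂ) :
    (V * diagonal f * star V).det = ∏ i, f i := by
  rw [Matrix.det_mul, Matrix.det_mul, mul_comm, ← mul_assoc, ← Matrix.det_mul, hV]
  simp

lemma conj_diag_psd (V : Matrix n n ℂ) (f : n → ℂ) (hf : ∀ i, 0 ≤ f i) :
    (V * diagonal f * star V).PosSemidef := by
  have := (Matrix.PosSemidef.diagonal (d := f) hf).mul_mul_conjTranspose_same V
  simpa [Matrix.star_eq_conjTranspose] using this

lemma diag_intertwine (G : Matrix n n ℂ) (d e : n → ℝ)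
    (h : G * diagonal (fun i => (d i : ℂ)) = diagonal (fun i => (e i : ℂ)) * G) (f : ℝ → ℝ) :
    G * diagonal (fun i => (f (d i) : ℂ)) = diagonal (fun i => (f (e i) : ℂ)) * G := by
  ext i j
  have h' := congrFun (congrFun h i) j
  simp only [Matrix.mul_diagonal, Matrix.diagonal_mul] at h' ⊢
  rcases eq_or_ne (G i j) 0 with hG | hG
  · simp [hG]
  · have hc : (d j : ℂ) = (e i : ℂ) := mul_left_cancel₀ hG (h'.trans (mul_comm _ _))
    have hde : d j = e i := by exact_mod_cast hc
    rw [hde, mul_comm]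

variable {N : ℕ}

lemma dot_self_eq (x : Fin N → ℂ) :
    star x ⬝ᵥ x = ((∑ i, Complex.normSq (x i) : ℝ) : ℂ) := by
  simp [dotProduct, Complex.normSq_eq_conj_mul_self, Complex.ofReal_sum]

lemma det_unit (K : Matrix (Fin N) (Fin N) ℂ)
    (h1 : (1 - Kᴴ * K).PosSemidef)
    (z : Fin N → ℂ) (hz : ∀ j, ‖z j‖ < 1) (t : ℝ) (ht : |t| ≤ 1) :
    IsUnit (1 - (t : ℂ) • (K * Matrix.diagonal z)).det := by
  rw [isUnit_iff_ne_zero]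
  intro hdet
  obtain ⟨v, hv0, hveq⟩ := Matrix.exists_mulVec_eq_zero_iff.mpr hdet
  set w : Fin N → ℂ := (Matrix.diagonal z) *ᵥ v with hw
  have hveq' : v = (t : ℂ) • (K *ᵥ w) := by
    have h := hveq
    rw [Matrix.sub_mulVec, Matrix.one_mulVec, sub_eq_zero] at h
    rw [h, Matrix.smul_mulVec, ← Matrix.mulVec_mulVec]
  set p : ℝ := ∑ i, Complex.normSq (v i) with hp
  set q : ℝ := ∑ i, Complex.normSq (w i) with hq
  set r : ℂ := star w ⬝ᵥ ((1 - Kᴴ * K) *ᵥ w) with hr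
  have hr0 : 0 ≤ r := h1.dotProduct_mulVec_nonneg w
  have hrim : r.im = 0 := by
    have := (Complex.le_def.mp hr0).2
    simpa using this.symm
  have hrre : 0 ≤ r.re := (Complex.le_def.mp hr0).1
  have hALT : star w ⬝ᵥ ((Kᴴ * K) *ᵥ w) = (q : ℂ) - r := by
    rw [hr, Matrix.sub_mulVec, Matrix.one_mulVec, dotProduct_sub, dot_self_eq]
    ring
  have key : (p : ℂ) = (t : ℂ) ^ 2 * ((q : ℂ) - r) := by
    have h1' : (p : ℂ) = star v ⬝ᵥ v := (dot_self_eq v).symm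
    rw [h1']
    rw [hveq']
    rw [star_smul, smul_dotProduct, dotProduct_smul]
    have hsc : star (t : ℂ) = (t : ℂ) := Complex.conj_ofReal t
    have hKw : star (K *ᵥ w) ⬝ᵥ (K *ᵥ w) = star w ⬝ᵥ ((Kᴴ * K) *ᵥ w) := by
      rw [Matrix.star_mulVec, ← Matrix.mulVec_mulVec, ← Matrix.dotProduct_mulVec]
    rw [hsc, hKw, hALT]
    simp [smul_eq_mul]; ring
  have preal : p = t ^ 2 * (q - r.re) := by
    have hrr : r = ((r.re : ℝ) : ℂ) := Complex.ext rfl (by simp [hrim])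
    rw [hrr] at key
    exact_mod_cast key
  have hwv : ∀ i, w i = z i * v i := fun i => by
    rw [hw]; exact Matrix.mulVec_diagonal _ _ _
  obtain ⟨i0, hi0⟩ : ∃ i, v i ≠ 0 := Function.ne_iff.mp hv0
  have hqp : q < p := by
    rw [hq, hp]
    apply Finset.sum_lt_sum
    · intro i _
      rw [hwv i, Complex.normSq_mul]
      have hle : Complex.normSq (z i) ≤ 1 := by
        rw [Complex.normSq_eq_norm_sq]
        exact pow_le_one₀ (norm_nonneg _) (hz i).le
      exact mul_le_of_le_one_left (Complex.normSq_nonneg _) hle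
    · refine ⟨i0, Finset.mem_univ _, ?_⟩
      rw [hwv i0, Complex.normSq_mul]
      have h1' : Complex.normSq (z i0) < 1 := by
        rw [Complex.normSq_eq_norm_sq]
        exact pow_lt_one₀ (norm_nonneg _) (hz i0) two_ne_zero
      have h2' : 0 < Complex.normSq (v i0) := Complex.normSq_pos.mpr hi0
      exact mul_lt_of_lt_one_left h2' h1'
  have ht2 : t ^ 2 ≤ 1 := by nlinarith [abs_le.mp ht]
  have hq0 : 0 ≤ q := Finset.sum_nonneg fun i _ => Complex.normSq_nonneg _
  nlinarith [sq_nonneg t]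

set_option maxHeartbeats 2000000 in
theorem aux_main (K : Matrix (Fin N) (Fin N) ℂ)
    (h1 : (1 - Kᴴ * K).PosSemidef) (h2 : (1 - K * Kᴴ).PosSemidef)
    (z : Fin N → ℂ) (hz : ∀ j, ‖z j‖ < 1) :
    (Matrix.diagonal z - Kᴴ).det =
      (1 - K * Matrix.diagonal z).det *
        (-Kᴴ + h1.sqrt * Matrix.diagonal z * (1 - K * Matrix.diagonal z)⁻¹ * h2.sqrt).det := by
  classical
  set Z := Matrix.diagonal z with hZ
  have hA : (Kᴴ * K).IsHermitian := isHermitian_conjTranspose_mul_self K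
  have hB : (K * Kᴴ).IsHermitian := isHermitian_mul_conjTranspose_self K
  set V1 : Matrix (Fin N) (Fin N) ℂ := (hA.eigenvectorUnitary : Matrix (Fin N) (Fin N) ℂ)
    with hV1def
  set V2 : Matrix (Fin N) (Fin N) ℂ := (hB.eigenvectorUnitary : Matrix (Fin N) (Fin N) ℂ)
    with hV2def
  set d1 : Fin N → ℝ := hA.eigenvalues with hd1def
  set d2 : Fin N → ℝ := hB.eigenvalues with hd2def
  have hV1 : V1 * star V1 = 1 := mem_unitaryGroup_iff.mp hA.eigenvectorUnitary.2
  have hV1' : star V1 * V1 = 1 := mem_unitaryGroup_iff'.mp hA.eigenvectorUnitary.2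
  have hV2 : V2 * star V2 = 1 := mem_unitaryGroup_iff.mp hB.eigenvectorUnitary.2
  have hV2' : star V2 * V2 = 1 := mem_unitaryGroup_iff'.mp hB.eigenvectorUnitary.2
  have hAspec : Kᴴ * K = V1 * diagonal (fun i => (d1 i : ℂ)) * star V1 := hA.spectral_theorem
  have hBspec : K * Kᴴ = V2 * diagonal (fun i => (d2 i : ℂ)) * star V2 := hB.spectral_theorem
  -- eigenvalue bounds
  have hd1_0 : ∀ i, 0 ≤ d1 i := fun i =>
    (Matrix.posSemidef_conjTranspose_mul_self K).eigenvalues_nonneg i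
  have hd2_0 : ∀ i, 0 ≤ d2 i := fun i =>
    (Matrix.posSemidef_self_mul_conjTranspose K).eigenvalues_nonneg i
  have upper : ∀ (W : Matrix (Fin N) (Fin N) ℂ) (V : Matrix (Fin N) (Fin N) ℂ)
      (d : Fin N → ℝ), (1 - W).PosSemidef → star V * V = 1 →
      star V * W * V = diagonal (fun i => (d i : ℂ)) → ∀ i, d i ≤ 1 := by
    intro W V d hW hV hdiag i
    have hps := hW.conjTranspose_mul_mul_same V
    have heq : star V * (1 - W) * V = diagonal (fun i => ((1 - d i : ℝ) : ℂ)) := by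
      rw [Matrix.mul_sub, Matrix.mul_one, Matrix.sub_mul, hV, hdiag]
      ext a b
      by_cases hab : a = b <;>
        simp [hab, Matrix.diagonal_apply, Matrix.one_apply, Matrix.sub_apply]
    rw [show Vᴴ = star V from rfl, heq] at hps
    have := (Matrix.posSemidef_diagonal_iff.mp hps) i
    have h01 : (0:ℝ) ≤ 1 - d i := Complex.zero_le_real.mp this
    linarith
  have hd1_1 : ∀ i, d1 i ≤ 1 := upper (Kᴴ * K) V1 d1 h1 hV1' (by
    rw [hAspec]
    calc star V1 * (V1 * diagonal (fun i => (d1 i : ℂ)) * star V1) * V1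
        = (star V1 * V1) * diagonal (fun i => (d1 i : ℂ)) * (star V1 * V1) := by
          simp only [Matrix.mul_assoc]
      _ = diagonal (fun i => (d1 i : ℂ)) := by rw [hV1']; simp)
  have hd2_1 : ∀ i, d2 i ≤ 1 := upper (K * Kᴴ) V2 d2 h2 hV2' (by
    rw [hBspec]
    calc star V2 * (V2 * diagonal (fun i => (d2 i : ℂ)) * star V2) * V2
        = (star V2 * V2) * diagonal (fun i => (d2 i : ℂ)) * (star V2 * V2) := by
          simp only [Matrix.mul_assoc]
      _ = diagonal (fun i => (d2 i : ℂ)) := by rw [hV2']; simp)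
  -- square-root families
  set s1 : ℝ → Matrix (Fin N) (Fin N) ℂ :=
    fun t => V1 * diagonal (fun i => (Real.sqrt (1 - t ^ 2 * d1 i) : ℂ)) * star V1 with hs1def
  set s2 : ℝ → Matrix (Fin N) (Fin N) ℂ :=
    fun t => V2 * diagonal (fun i => (Real.sqrt (1 - t ^ 2 * d2 i) : ℂ)) * star V2 with hs2def
  have harg1 : ∀ t : ℝ, t ^ 2 ≤ 1 → ∀ i, 0 ≤ 1 - t ^ 2 * d1 i := by
    intro t ht i; nlinarith [hd1_0 i, hd1_1 i, sq_nonneg t]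
  have harg2 : ∀ t : ℝ, t ^ 2 ≤ 1 → ∀ i, 0 ≤ 1 - t ^ 2 * d2 i := by
    intro t ht i; nlinarith [hd2_0 i, hd2_1 i, sq_nonneg t]
  have sqgen : ∀ (V W : Matrix (Fin N) (Fin N) ℂ) (d : Fin N → ℝ) (t : ℝ),
      star V * V = 1 → V * star V = 1 → W = V * diagonal (fun i => (d i : ℂ)) * star V →
      (∀ i, 0 ≤ 1 - t ^ 2 * d i) →
      (V * diagonal (fun i => (Real.sqrt (1 - t ^ 2 * d i) : ℂ)) * star V) *
        (V * diagonal (fun i => (Real.sqrt (1 - t ^ 2 * d i) : ℂ)) * star V)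
        = 1 - ((t : ℂ)) ^ 2 • W := by
    intro V W d t hV' hV hspec hnn
    rw [conj_diag_mul V hV']
    have hfun : (fun i => (Real.sqrt (1 - t ^ 2 * d i) : ℂ) * (Real.sqrt (1 - t ^ 2 * d i) : ℂ))
        = fun i => 1 - ((t : ℂ)) ^ 2 * (d i : ℂ) := by
      funext i
      rw [← Complex.ofReal_mul, Real.mul_self_sqrt (hnn i)]
      push_cast; ring
    rw [hfun]
    have hdiag : diagonal (fun i => 1 - ((t : ℂ)) ^ 2 * (d i : ℂ))
        = 1 - ((t : ℂ)) ^ 2 • diagonal (fun i => (d i : ℂ)) := by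
      ext a b
      by_cases hab : a = b <;>
        simp [hab, Matrix.diagonal_apply, Matrix.one_apply, Matrix.sub_apply, Matrix.smul_apply]
    rw [hdiag, Matrix.mul_sub, Matrix.sub_mul, Matrix.mul_one, hV, hspec]
    congr 1
    rw [Matrix.mul_smul, Matrix.smul_mul]
  have hs1sq : ∀ t : ℝ, t ^ 2 ≤ 1 → s1 t * s1 t = 1 - ((t : ℂ)) ^ 2 • (Kᴴ * K) :=
    fun t ht => sqgen V1 (Kᴴ * K) d1 t hV1' hV1 hAspec (harg1 t ht)
  have hs2sq : ∀ t : ℝ, t ^ 2 ≤ 1 → s2 t * s2 t = 1 - ((t : ℂ)) ^ 2 • (K * Kᴴ) :=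
    fun t ht => sqgen V2 (K * Kᴴ) d2 t hV2' hV2 hBspec (harg2 t ht)
  have hs1psd : ∀ t, (s1 t).PosSemidef :=
    fun t => conj_diag_psd V1 _ (fun i => Complex.zero_le_real.mpr (Real.sqrt_nonneg _))
  have hs2psd : ∀ t, (s2 t).PosSemidef :=
    fun t => conj_diag_psd V2 _ (fun i => Complex.zero_le_real.mpr (Real.sqrt_nonneg _))
  have hs1det : ∀ t, (s1 t).det = ((∏ i, Real.sqrt (1 - t ^ 2 * d1 i) : ℝ) : ℂ) := by
    intro t; rw [conj_diag_det V1 hV1']; exact (Complex.ofReal_prod _ _).symm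
  have hs2det : ∀ t, (s2 t).det = ((∏ i, Real.sqrt (1 - t ^ 2 * d2 i) : ℝ) : ℂ) := by
    intro t; rw [conj_diag_det V2 hV2']; exact (Complex.ofReal_prod _ _).symm
  have hdeteq : ∀ t : ℝ, t ^ 2 ≤ 1 →
      (∏ i, Real.sqrt (1 - t ^ 2 * d1 i)) = (∏ i, Real.sqrt (1 - t ^ 2 * d2 i)) := by
    intro t ht
    have e1 : (((∏ i, Real.sqrt (1 - t ^ 2 * d1 i)) : ℝ) : ℂ) ^ 2
        = (1 - ((t : ℂ)) ^ 2 • (Kᴴ * K)).det := by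
      rw [← hs1det t, sq, ← Matrix.det_mul, hs1sq t ht]
    have e2 : (((∏ i, Real.sqrt (1 - t ^ 2 * d2 i)) : ℝ) : ℂ) ^ 2
        = (1 - ((t : ℂ)) ^ 2 • (K * Kᴴ)).det := by
      rw [← hs2det t, sq, ← Matrix.det_mul, hs2sq t ht]
    have e3 : (1 - ((t : ℂ)) ^ 2 • (Kᴴ * K)).det = (1 - ((t : ℂ)) ^ 2 • (K * Kᴴ)).det := by
      have h := Matrix.det_one_sub_mul_comm ((((t : ℂ)) ^ 2) • Kᴴ) K
      rw [Matrix.smul_mul, Matrix.mul_smul] at h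
      exact h
    have e4 : (((∏ i, Real.sqrt (1 - t ^ 2 * d1 i)) : ℝ) : ℂ) ^ 2
        = (((∏ i, Real.sqrt (1 - t ^ 2 * d2 i)) : ℝ) : ℂ) ^ 2 := by rw [e1, e3, ← e2]
    have e5 : (∏ i, Real.sqrt (1 - t ^ 2 * d1 i)) ^ 2
        = (∏ i, Real.sqrt (1 - t ^ 2 * d2 i)) ^ 2 := by exact_mod_cast e4
    have p1 : 0 ≤ ∏ i, Real.sqrt (1 - t ^ 2 * d1 i) :=
      Finset.prod_nonneg fun i _ => Real.sqrt_nonneg _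
    have p2 : 0 ≤ ∏ i, Real.sqrt (1 - t ^ 2 * d2 i) :=
      Finset.prod_nonneg fun i _ => Real.sqrt_nonneg _
    nlinarith [e5, p1, p2]
  have hprodpos : ∀ t : ℝ, t ^ 2 < 1 → 0 < ∏ i, Real.sqrt (1 - t ^ 2 * d1 i) := by
    intro t ht
    apply Finset.prod_pos
    intro i _
    apply Real.sqrt_pos.mpr
    nlinarith [hd1_0 i, hd1_1 i, sq_nonneg t]
  -- intertwining
  set G : Matrix (Fin N) (Fin N) ℂ := star V2 * K * V1 with hGdef
  have hKdec : K = V2 * G * star V1 := by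
    rw [hGdef]
    calc K = (V2 * star V2) * K * (V1 * star V1) := by rw [hV2, hV1]; simp
      _ = V2 * (star V2 * K * V1) * star V1 := by simp only [Matrix.mul_assoc]
  have hGd : G * diagonal (fun i => (d1 i : ℂ)) = diagonal (fun i => (d2 i : ℂ)) * G := by
    have hstep1 : V1 * diagonal (fun i => (d1 i : ℂ)) = (Kᴴ * K) * V1 := by
      rw [hAspec]
      calc V1 * diagonal (fun i => (d1 i : ℂ))
          = V1 * diagonal (fun i => (d1 i : ℂ)) * (star V1 * V1) := by
            rw [hV1', Matrix.mul_one]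
        _ = (V1 * diagonal (fun i => (d1 i : ℂ)) * star V1) * V1 := by
            simp only [Matrix.mul_assoc]
    have hstep2 : diagonal (fun i => (d2 i : ℂ)) * star V2 = star V2 * (K * Kᴴ) := by
      rw [hBspec]
      calc diagonal (fun i => (d2 i : ℂ)) * star V2
          = (star V2 * V2) * diagonal (fun i => (d2 i : ℂ)) * star V2 := by
            rw [hV2', Matrix.one_mul]
        _ = star V2 * (V2 * diagonal (fun i => (d2 i : ℂ)) * star V2) := by
            simp only [Matrix.mul_assoc]
    calc G * diagonal (fun i => (d1 i : ℂ))
        = star V2 * K * (V1 * diagonal (fun i => (d1 i : ℂ))) := by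
          rw [hGdef]; simp only [Matrix.mul_assoc]
      _ = star V2 * K * ((Kᴴ * K) * V1) := by rw [hstep1]
      _ = (star V2 * (K * Kᴴ)) * (K * V1) := by simp only [Matrix.mul_assoc]
      _ = (diagonal (fun i => (d2 i : ℂ)) * star V2) * (K * V1) := by rw [hstep2]
      _ = diagonal (fun i => (d2 i : ℂ)) * G := by rw [hGdef]; simp only [Matrix.mul_assoc]
  have hinter : ∀ t : ℝ, K * s1 t = s2 t * K := by
    intro t
    have hf := diag_intertwine G d1 d2 hGd (fun x => Real.sqrt (1 - t ^ 2 * x))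
    calc K * s1 t
        = (V2 * G * star V1) *
            (V1 * diagonal (fun i => (Real.sqrt (1 - t ^ 2 * d1 i) : ℂ)) * star V1) := by
          rw [← hKdec, hs1def]
      _ = V2 * (G * ((star V1 * V1) *
            diagonal (fun i => (Real.sqrt (1 - t ^ 2 * d1 i) : ℂ)))) * star V1 := by
          simp only [Matrix.mul_assoc]
      _ = V2 * (G * diagonal (fun i => (Real.sqrt (1 - t ^ 2 * d1 i) : ℂ))) * star V1 := by
          rw [hV1', Matrix.one_mul]
      _ = V2 * (diagonal (fun i => (Real.sqrt (1 - t ^ 2 * d2 i) : ℂ)) * G) * star V1 := by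
          rw [hf]
      _ = V2 * (diagonal (fun i => (Real.sqrt (1 - t ^ 2 * d2 i) : ℂ)) *
            ((star V2 * V2) * G)) * star V1 := by rw [hV2', Matrix.one_mul]
      _ = (V2 * diagonal (fun i => (Real.sqrt (1 - t ^ 2 * d2 i) : ℂ)) * star V2) *
            (V2 * G * star V1) := by simp only [Matrix.mul_assoc]
      _ = s2 t * K := by rw [← hKdec, hs2def]
  have hinterH : ∀ t : ℝ, s1 t * Kᴴ = Kᴴ * s2 t := by
    intro t
    have h1h : (s1 t)ᴴ = s1 t := (hs1psd t).1
    have h2h : (s2 t)ᴴ = s2 t := (hs2psd t).1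
    have e1 : s1 t * Kᴴ = (K * s1 t)ᴴ := by rw [Matrix.conjTranspose_mul, h1h]
    rw [e1, hinter t, Matrix.conjTranspose_mul, h2h]
  have hconts1 : Continuous s1 := by
    refine Continuous.matrix_mul (Continuous.matrix_mul continuous_const ?_) continuous_const
    refine Continuous.matrix_diagonal (continuous_pi fun i => ?_)
    exact Complex.continuous_ofReal.comp (Real.continuous_sqrt.comp
      (continuous_const.sub ((continuous_pow 2).mul continuous_const)))
  have hconts2 : Continuous s2 := by
    refine Continuous.matrix_mul (Continuous.matrix_mul continuous_const ?_) continuous_const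
    refine Continuous.matrix_diagonal (continuous_pi fun i => ?_)
    exact Complex.continuous_ofReal.comp (Real.continuous_sqrt.comp
      (continuous_const.sub ((continuous_pow 2).mul continuous_const)))
  have det_unit' : ∀ t : ℝ, |t| ≤ 1 → IsUnit (1 - (t : ℂ) • (K * Z)).det := by
    intro t ht; rw [hZ]; exact det_unit K h1 z hz t ht
  clear_value Z V1 V2 d1 d2 s1 s2 G
  -- the identity for t ∈ [0,1)
  have key : ∀ t : ℝ, 0 ≤ t → t < 1 →
      (Z - (t : ℂ) • Kᴴ).det =
        (1 - (t : ℂ) • (K * Z)).det *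
          (-((t : ℂ) • Kᴴ) + s1 t * Z * ((1 - (t : ℂ) • (K * Z))⁻¹) * s2 t).det := by
    intro t ht0 ht1
    have ht2 : t ^ 2 ≤ 1 := by nlinarith
    have ht2' : t ^ 2 < 1 := by nlinarith
    set Wt : Matrix (Fin N) (Fin N) ℂ := 1 - (t : ℂ) • (K * Z) with hWt
    have hdW : IsUnit Wt.det := det_unit' t (by rw [abs_of_nonneg ht0]; exact ht1.le)
    set Mt : Matrix (Fin N) (Fin N) ℂ := -((t : ℂ) • Kᴴ) + s1 t * Z * Wt⁻¹ * s2 t with hMt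
    have expand : (-((t : ℂ) • Kᴴ) + (1 - ((t : ℂ)) ^ 2 • (Kᴴ * K)) * Z * Wt⁻¹) * Wt
        = Z - (t : ℂ) • Kᴴ := by
      rw [add_mul]
      have e1 : (1 - ((t : ℂ)) ^ 2 • (Kᴴ * K)) * Z * Wt⁻¹ * Wt
          = (1 - ((t : ℂ)) ^ 2 • (Kᴴ * K)) * Z := by
        rw [Matrix.mul_assoc _ (Wt⁻¹) Wt, Matrix.nonsing_inv_mul _ hdW, Matrix.mul_one]
      rw [e1, hWt]
      have A1 : (-((t : ℂ) • Kᴴ)) * (1 - (t : ℂ) • (K * Z))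
          = -((t : ℂ) • Kᴴ) + ((t : ℂ)) ^ 2 • (Kᴴ * (K * Z)) := by
        rw [Matrix.mul_sub, Matrix.mul_one, neg_mul, sub_neg_eq_add, smul_mul_assoc,
          mul_smul_comm, smul_smul, pow_two]
      have A2 : (1 - ((t : ℂ)) ^ 2 • (Kᴴ * K)) * Z = Z - ((t : ℂ)) ^ 2 • (Kᴴ * (K * Z)) := by
        rw [Matrix.sub_mul, Matrix.one_mul, Matrix.smul_mul, Matrix.mul_assoc]
      rw [A1, A2]
      abel
    have hsM : s1 t * Mt = (-((t : ℂ) • Kᴴ) + (1 - ((t : ℂ)) ^ 2 • (Kᴴ * K)) * Z * Wt⁻¹) * s2 t := by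
      rw [hMt, Matrix.mul_add, add_mul]
      congr 1
      · rw [Matrix.mul_neg, Matrix.neg_mul, mul_smul_comm, hinterH t, smul_mul_assoc]
      · calc s1 t * (s1 t * Z * Wt⁻¹ * s2 t)
            = (s1 t * s1 t) * (Z * (Wt⁻¹ * s2 t)) := by simp only [Matrix.mul_assoc]
          _ = (1 - ((t : ℂ)) ^ 2 • (Kᴴ * K)) * Z * Wt⁻¹ * s2 t := by
              rw [hs1sq t ht2]; simp only [Matrix.mul_assoc]
    have inner : -((t : ℂ) • Kᴴ) + (1 - ((t : ℂ)) ^ 2 • (Kᴴ * K)) * Z * Wt⁻¹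
        = (Z - (t : ℂ) • Kᴴ) * Wt⁻¹ := by
      calc -((t : ℂ) • Kᴴ) + (1 - ((t : ℂ)) ^ 2 • (Kᴴ * K)) * Z * Wt⁻¹
          = (-((t : ℂ) • Kᴴ) + (1 - ((t : ℂ)) ^ 2 • (Kᴴ * K)) * Z * Wt⁻¹) * (Wt * Wt⁻¹) := by
            rw [Matrix.mul_nonsing_inv _ hdW, Matrix.mul_one]
        _ = ((-((t : ℂ) • Kᴴ) + (1 - ((t : ℂ)) ^ 2 • (Kᴴ * K)) * Z * Wt⁻¹) * Wt) * Wt⁻¹ := by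
            simp only [Matrix.mul_assoc]
        _ = (Z - (t : ℂ) • Kᴴ) * Wt⁻¹ := by rw [expand]
    have star_id : s1 t * Mt = (Z - (t : ℂ) • Kᴴ) * Wt⁻¹ * s2 t := by rw [hsM, inner]
    have hdetM : (s1 t).det * Mt.det = (Z - (t : ℂ) • Kᴴ).det * (Wt⁻¹).det * (s2 t).det := by
      rw [← Matrix.det_mul, star_id, Matrix.det_mul, Matrix.det_mul]
    have hdet12 : (s1 t).det = (s2 t).det := by rw [hs1det, hs2det, hdeteq t ht2]
    have hdetne : (s2 t).det ≠ 0 := by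
      rw [hs2det, ← hdeteq t ht2]
      exact_mod_cast (hprodpos t ht2').ne'
    have hMdet : Mt.det = (Z - (t : ℂ) • Kᴴ).det * (Wt⁻¹).det := by
      rw [hdet12] at hdetM
      rw [mul_comm ((s2 t).det) (Mt.det)] at hdetM
      exact mul_right_cancel₀ hdetne hdetM
    have hWdetne : Wt.det ≠ 0 := hdW.ne_zero
    calc (Z - (t : ℂ) • Kᴴ).det
        = (Z - (t : ℂ) • Kᴴ).det * (Wt.det * (Wt⁻¹).det) := by
          rw [Matrix.det_nonsing_inv, Ring.inverse_eq_inv', mul_inv_cancel₀ hWdetne, mul_one]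
      _ = Wt.det * Mt.det := by rw [hMdet]; ring
  -- continuity and passage to the limit t → 1⁻
  have hinveq : ∀ t : ℝ, (1 - (t : ℂ) • (K * Z))⁻¹
      = (1 - (t : ℂ) • (K * Z)).det⁻¹ • (1 - (t : ℂ) • (K * Z)).adjugate := by
    intro t; rw [Matrix.inv_def, Ring.inverse_eq_inv']
  set F : ℝ → ℂ := fun t => (Z - (t : ℂ) • Kᴴ).det with hF
  set Gf : ℝ → ℂ := fun t =>
    (1 - (t : ℂ) • (K * Z)).det *
      (-((t : ℂ) • Kᴴ) + s1 t * Z *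
        ((1 - (t : ℂ) • (K * Z)).det⁻¹ • (1 - (t : ℂ) • (K * Z)).adjugate) * s2 t).det with hGf
  have hFG : ∀ t : ℝ, 0 ≤ t → t < 1 → F t = Gf t := by
    intro t h0 h1t
    show (Z - (t : ℂ) • Kᴴ).det = (1 - (t : ℂ) • (K * Z)).det *
      (-((t : ℂ) • Kᴴ) + s1 t * Z *
        ((1 - (t : ℂ) • (K * Z)).det⁻¹ • (1 - (t : ℂ) • (K * Z)).adjugate) * s2 t).det
    rw [← hinveq t]
    exact key t h0 h1t
  have hcont_c : Continuous (fun t : ℝ => (t : ℂ)) := Complex.continuous_ofReal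
  have hcontF : Continuous F :=
    (continuous_const.sub (hcont_c.smul continuous_const)).matrix_det
  have hdet1 : (1 - ((1 : ℝ) : ℂ) • (K * Z)).det ≠ 0 :=
    (det_unit' 1 (by norm_num)).ne_zero
  have hcontdet : Continuous (fun t : ℝ => (1 - (t : ℂ) • (K * Z)).det) :=
    (continuous_const.sub (hcont_c.smul continuous_const)).matrix_det
  have hcontadj : Continuous (fun t : ℝ => (1 - (t : ℂ) • (K * Z)).adjugate) :=
    (continuous_const.sub (hcont_c.smul continuous_const)).matrix_adjugate
  have hcontinv : ContinuousAt (fun t : ℝ =>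
      (1 - (t : ℂ) • (K * Z)).det⁻¹ • (1 - (t : ℂ) • (K * Z)).adjugate) 1 :=
    ((hcontdet.continuousAt).inv₀ hdet1).smul hcontadj.continuousAt
  have hdetmap : Continuous (fun M : Matrix (Fin N) (Fin N) ℂ => M.det) :=
    continuous_id.matrix_det
  have hcontG : ContinuousAt Gf 1 := by
    apply ContinuousAt.mul hcontdet.continuousAt
    apply hdetmap.continuousAt.comp
    apply ContinuousAt.add
    · exact ((hcont_c.smul continuous_const).neg).continuousAt
    · exact ((hconts1.continuousAt.mul continuousAt_const).mul hcontinv).mul hconts2.continuousAt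
  have hmem : Set.Ioo (0 : ℝ) 1 ∈ nhdsWithin (1 : ℝ) (Set.Iio 1) :=
    Ioo_mem_nhdsLT_of_mem (by constructor <;> norm_num)
  have heq : F =ᶠ[nhdsWithin (1 : ℝ) (Set.Iio 1)] Gf :=
    Filter.eventuallyEq_of_mem hmem (fun t ht => hFG t ht.1.le ht.2)
  have l1 : Tendsto F (nhdsWithin (1 : ℝ) (Set.Iio 1)) (𝓝 (F 1)) :=
    (hcontF.continuousAt).continuousWithinAt
  have l2 : Tendsto Gf (nhdsWithin (1 : ℝ) (Set.Iio 1)) (𝓝 (Gf 1)) :=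
    hcontG.continuousWithinAt
  have hF1G1 : F 1 = Gf 1 := tendsto_nhds_unique_of_eventuallyEq l1 l2 heq
  -- identify s1 1 and s2 1 with the canonical square roots
  have hs1_1 : h1.sqrt = s1 1 := by
    refine ((hs1psd 1).eq_sqrt_of_sq_eq h1 ?_).symm
    rw [pow_two, hs1sq 1 (by norm_num)]
    norm_num
  have hs2_1 : h2.sqrt = s2 1 := by
    refine ((hs2psd 1).eq_sqrt_of_sq_eq h2 ?_).symm
    rw [pow_two, hs2sq 1 (by norm_num)]
    norm_num
  have hF1 : F 1 = (Z - Kᴴ).det := by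
    show (Z - ((1 : ℝ) : ℂ) • Kᴴ).det = _
    norm_num
  have hG1 : Gf 1 = (1 - K * Z).det * (-Kᴴ + h1.sqrt * Z * (1 - K * Z)⁻¹ * h2.sqrt).det := by
    show (1 - ((1 : ℝ) : ℂ) • (K * Z)).det *
      (-(((1 : ℝ) : ℂ) • Kᴴ) + s1 1 * Z *
        ((1 - ((1 : ℝ) : ℂ) • (K * Z)).det⁻¹ • (1 - ((1 : ℝ) : ℂ) • (K * Z)).adjugate) * s2 1).det = _
    rw [← hinveq 1, ← hs1_1, ← hs2_1]
    norm_num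
  rw [← hF1, hF1G1, hG1]

end DetDiagAux

/-- For a contraction `K` and a diagonal matrix `Z` with entries in the open
unit disk, `det (Z - K*) = det (I - K Z) ⬝ det (-K* + √(I-K*K) Z (I-KZ)⁻¹ √(I-KK*))`. -/
theorem det_diag_sub_star_eq {N : ℕ} (K : Matrix (Fin N) (Fin N) ℂ)
    (hK : ‖K‖ ≤ 1)
    (h1 : (1 - Kᴴ * K).PosSemidef) (h2 : (1 - K * Kᴴ).PosSemidef)
    (z : Fin N → ℂ) (hz : ∀ j, ‖z j‖ < 1) :
    (Matrix.diagonal z - Kᴴ).det =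
      (1 - K * Matrix.diagonal z).det *
        (-Kᴴ + h1.sqrt * Matrix.diagonal z * (1 - K * Matrix.diagonal z)⁻¹ * h2.sqrt).det :=
  DetDiagAux.aux_main K h1 h2 z hz
end

section
/- Let $d \ge 2$ be even and $s > d/2 - 1$. Define $p(z_1, \ldots, z_d) = (1+s)\sum_{m=1}^d z_m^2 - (\sum_{m=1}^d z_m)^2$. Then $\sup_{z \in \overline{\mathbb{D}}^d} |p(z)| = (1+s)d$. -/
/-- For even `d ≥ 2` and `s > d/2 - 1`, the polynomial
`p(z) = (1+s) ∑ z_m² - (∑ z_m)²` satisfies `sup_{z ∈ closed 𝔻^d} |p(z)| = (1+s) d`,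
and the supremum is attained. -/
theorem kvh_sup_norm_even {d : ℕ} (hd : 2 ≤ d) (hde : Even d) (s : ℝ)
    (hs : (d : ℝ) / 2 - 1 < s) :
    IsGreatest
      {x : ℝ | ∃ z : Fin d → ℂ, (∀ i, ‖z i‖ ≤ 1) ∧
        x = ‖(1 + (s : ℂ)) * ∑ m, (z m) ^ 2 - (∑ m, z m) ^ 2‖}
      ((1 + s) * d) := by
  have hd2 : (2:ℝ) ≤ (d:ℝ) := by exact_mod_cast hd
  have hs0 : 0 < 1 + s := by linarith
  constructor
  · -- membership: take z i = (-1)^i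
    refine ⟨fun i => (-1 : ℂ) ^ (i : ℕ), fun i => by simp, ?_⟩
    have h1 : (∑ m : Fin d, ((-1 : ℂ) ^ (m : ℕ)) ^ 2) = (d : ℂ) := by
      have : ∀ m : Fin d, ((-1 : ℂ) ^ (m : ℕ)) ^ 2 = 1 := by
        intro m
        rw [← pow_mul, mul_comm, pow_mul]
        norm_num
      simp [this]
    have h2 : (∑ m : Fin d, ((-1 : ℂ) ^ (m : ℕ))) = 0 := by
      rw [Fin.sum_univ_eq_sum_range (fun m => (-1 : ℂ) ^ m), neg_one_geom_sum]
      simp [hde]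
    rw [h1, h2]
    rw [show (1 + (s:ℂ)) * (d:ℂ) - 0 ^ 2 = ((((1+s)*d : ℝ)) : ℂ) by push_cast; ring]
    rw [Complex.norm_real, Real.norm_eq_abs, abs_of_nonneg (by positivity)]
  · -- upper bound
    rintro x ⟨z, hz, rfl⟩
    set S : ℂ := ∑ m, z m with hS
    set a : Fin d → ℝ := fun i => ‖z i‖ with ha
    set b : Fin d → ℝ := fun i => ‖(1 + (s:ℂ)) * z i - S‖ with hb
    have ha0 : ∀ i, 0 ≤ a i := fun i => norm_nonneg _
    -- rewrite p as a sum
    have hp : (1 + (s : ℂ)) * ∑ m, (z m) ^ 2 - S ^ 2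
        = ∑ m, z m * ((1 + (s:ℂ)) * z m - S) := by
      rw [Finset.mul_sum]
      rw [show S ^ 2 = (∑ m, z m) * S by rw [hS]; ring]
      rw [Finset.sum_mul, ← Finset.sum_sub_distrib]
      exact Finset.sum_congr rfl (fun m _ => by ring)
    have step2 : ‖(1 + (s : ℂ)) * ∑ m, (z m) ^ 2 - S ^ 2‖
        ≤ ∑ i, a i * b i := by
      rw [hp]
      refine (norm_sum_le _ _).trans_eq ?_
      exact Finset.sum_congr rfl (fun i _ => norm_mul _ _)
    have hcs : (∑ i, a i * b i) ^ 2 ≤ (∑ i, a i ^ 2) * (∑ i, b i ^ 2) :=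
      Finset.sum_mul_sq_le_sq_mul_sq _ _ _
    -- the key identity
    have hSre : S.re = ∑ i, (z i).re := by rw [hS, Complex.re_sum]
    have hSim : S.im = ∑ i, (z i).im := by rw [hS, Complex.im_sum]
    have expand : ∀ i, b i ^ 2 =
        (1+s)^2 * ((z i).re^2 + (z i).im^2)
          - 2*(1+s)*((z i).re * S.re + (z i).im * S.im)
          + (S.re^2 + S.im^2) := by
      intro i
      rw [hb]
      simp only [Complex.sq_norm, Complex.normSq_apply, Complex.sub_re, Complex.sub_im,
        Complex.mul_re, Complex.mul_im, Complex.add_re, Complex.add_im,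
        Complex.one_re, Complex.one_im, Complex.ofReal_re, Complex.ofReal_im]
      ring
    have key : ∑ i, b i ^ 2 =
        (1+s)^2 * (∑ i, a i ^ 2) + ((d:ℝ) - 2*(1+s)) * (S.re^2 + S.im^2) := by
      have haeq : ∀ i, a i ^ 2 = (z i).re^2 + (z i).im^2 := by
        intro i
        rw [ha]
        simp only [Complex.sq_norm, Complex.normSq_apply]
        ring
      calc ∑ i, b i ^ 2
          = ∑ i, ((1+s)^2 * ((z i).re^2 + (z i).im^2)
            - 2*(1+s)*((z i).re * S.re + (z i).im * S.im)
            + (S.re^2 + S.im^2)) := Finset.sum_congr rfl (fun i _ => expand i)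
        _ = (1+s)^2 * (∑ i, ((z i).re^2 + (z i).im^2))
            - 2*(1+s)*((∑ i, (z i).re) * S.re + (∑ i, (z i).im) * S.im)
            + (d:ℝ) * (S.re^2 + S.im^2) := by
            rw [Finset.sum_add_distrib, Finset.sum_sub_distrib, ← Finset.mul_sum,
              Finset.sum_const, Finset.card_univ, Fintype.card_fin, nsmul_eq_mul]
            have hmid : ∑ x : Fin d, 2*(1+s)*((z x).re * S.re + (z x).im * S.im)
                = 2*(1+s)*((∑ i, (z i).re) * S.re + (∑ i, (z i).im) * S.im) := by
              rw [← Finset.mul_sum, Finset.sum_add_distrib, ← Finset.sum_mul, ← Finset.sum_mul]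
            rw [hmid]
        _ = (1+s)^2 * (∑ i, a i ^ 2) + ((d:ℝ) - 2*(1+s)) * (S.re^2 + S.im^2) := by
            rw [← hSre, ← hSim]
            rw [Finset.sum_congr rfl (fun i _ => (haeq i).symm)]
            ring
    have hsum_a : ∑ i, a i ^ 2 ≤ (d:ℝ) := by
      calc ∑ i, a i ^ 2 ≤ ∑ _i : Fin d, (1:ℝ) :=
            Finset.sum_le_sum (fun i _ => by
              have := hz i
              nlinarith [ha0 i])
        _ = (d:ℝ) := by simp
    have hsum_a0 : 0 ≤ ∑ i, a i ^ 2 := Finset.sum_nonneg (fun i _ => sq_nonneg _)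
    have hb_le : ∑ i, b i ^ 2 ≤ (1+s)^2 * (∑ i, a i ^ 2) := by
      rw [key]
      have hneg : (d:ℝ) - 2*(1+s) ≤ 0 := by linarith
      nlinarith [sq_nonneg S.re, sq_nonneg S.im]
    have hab : (∑ i, a i * b i) ^ 2 ≤ ((1+s) * d) ^ 2 := by
      calc (∑ i, a i * b i) ^ 2 ≤ (∑ i, a i ^ 2) * (∑ i, b i ^ 2) := hcs
        _ ≤ (d:ℝ) * ((1+s)^2 * (d:ℝ)) := by
            have h1 : (∑ i, b i ^ 2) ≤ (1+s)^2 * (d:ℝ) := by nlinarith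
            have h2 : 0 ≤ ∑ i, b i ^ 2 := Finset.sum_nonneg (fun i _ => sq_nonneg _)
            nlinarith
        _ = ((1+s) * d) ^ 2 := by ring
    have habnn : 0 ≤ ∑ i, a i * b i :=
      Finset.sum_nonneg (fun i _ => mul_nonneg (ha0 i) (norm_nonneg _))
    have hfinal : ∑ i, a i * b i ≤ (1+s) * d := by
      nlinarith [mul_pos hs0 (by linarith : (0:ℝ) < (d:ℝ))]
    exact step2.trans hfinal
end

section
/- Let $d \ge 3$ be odd and $s > d/2 - 1$. Define $p(z_1, \ldots, z_d) = (1+s)\sum_{m=1}^d z_m^2 - (\sum_{m=1}^d z_m)^2$. Then $\sup_{z \in \overline{\mathbb{D}}^d} |p(z)| < (1+s)d$. -/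
/-- For odd `d ≥ 3` and `s > d/2 - 1`, the polynomial
`p(z) = (1+s) ∑ z_m² - (∑ z_m)²` satisfies `|p(z)| < (1+s) d` on the closed
unit polydisk (hence its sup norm is strictly less than `(1+s) d`). -/
theorem kvh_sup_norm_odd {d : ℕ} (hd : 3 ≤ d) (hdo : Odd d) (s : ℝ)
    (hs : (d : ℝ) / 2 - 1 < s) :
    ∀ z : Fin d → ℂ, (∀ i, ‖z i‖ ≤ 1) →
      ‖(1 + (s : ℂ)) * ∑ m, (z m) ^ 2 - (∑ m, z m) ^ 2‖ < (1 + s) * d := by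
  intro z hz
  have hd3 : (3:ℝ) ≤ d := by exact_mod_cast hd
  have hdpos : (0:ℝ) < d := by linarith
  have hs1 : (0:ℝ) < 1 + s := by linarith
  set S : ℂ := ∑ m, (z m)^2 with hS
  set b : ℂ := ∑ m, z m with hb
  have hN : ∑ m, Complex.normSq (z m) ≤ (d:ℝ) := by
    calc ∑ m, Complex.normSq (z m) ≤ ∑ _m : Fin d, (1:ℝ) := by
          apply Finset.sum_le_sum
          intro i _
          rw [← Complex.sq_norm]
          nlinarith [norm_nonneg (z i), hz i]
      _ = d := by simp
  by_cases hb0 : b = 0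
  · -- case `∑ z = 0`
    rw [hb0]
    rw [show ((0:ℂ)^2 = 0) from by ring, sub_zero]
    have key : ‖S‖ < d := by
      have hSle : ‖S‖ ≤ d := by
        calc ‖S‖ ≤ ∑ m, ‖z m ^ 2‖ := norm_sum_le _ _
          _ ≤ ∑ _m : Fin d, (1:ℝ) := by
              apply Finset.sum_le_sum
              intro i _
              rw [norm_pow]
              exact pow_le_one₀ (norm_nonneg _) (hz i)
          _ = d := by simp
      by_contra hcon
      have hSd : ‖S‖ = d := le_antisymm hSle (not_lt.mp hcon)
      have hS0 : S ≠ 0 := by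
        intro h
        rw [h] at hSd
        simp at hSd
        linarith
      have habs_le : ∀ i : Fin d, ‖(starRingEnd ℂ) S * z i ^ 2‖ ≤ d := by
        intro i
        rw [norm_mul, Complex.norm_conj, norm_pow, hSd]
        calc (d:ℝ) * ‖z i‖ ^ 2 ≤ d * 1 := by
              apply mul_le_mul_of_nonneg_left _ (le_of_lt hdpos)
              nlinarith [norm_nonneg (z i), hz i]
          _ = d := mul_one _
      have hterm_le : ∀ i : Fin d, ((starRingEnd ℂ) S * z i ^ 2).re ≤ (d:ℝ) :=
        fun i => le_trans (Complex.re_le_norm _) (habs_le i)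
      have hsum : ∑ i, ((starRingEnd ℂ) S * z i ^ 2).re = (d:ℝ)^2 := by
        rw [← Complex.re_sum, ← Finset.mul_sum, ← hS]
        rw [mul_comm, Complex.mul_conj]
        rw [Complex.ofReal_re, Complex.normSq_eq_norm_sq, hSd]
      have hall : ∀ i : Fin d, (starRingEnd ℂ) S * z i ^ 2 = (d:ℂ) := by
        have hre : ∀ i : Fin d, ((starRingEnd ℂ) S * z i ^ 2).re = d := by
          by_contra hc
          push_neg at hc
          obtain ⟨i, hi⟩ := hc
          have hlt : ∑ j, ((starRingEnd ℂ) S * z j ^ 2).re < ∑ _j : Fin d, (d:ℝ) :=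
            Finset.sum_lt_sum (fun j _ => hterm_le j)
              ⟨i, Finset.mem_univ i, lt_of_le_of_ne (hterm_le i) hi⟩
          rw [hsum] at hlt
          simp [Finset.sum_const] at hlt
          nlinarith
        intro i
        have h1 := hre i
        have h2 : Complex.normSq ((starRingEnd ℂ) S * z i ^ 2) ≤ (d:ℝ)^2 := by
          rw [Complex.normSq_eq_norm_sq]
          nlinarith [norm_nonneg ((starRingEnd ℂ) S * z i ^ 2), habs_le i]
        have h3 := Complex.normSq_apply ((starRingEnd ℂ) S * z i ^ 2)
        have him : ((starRingEnd ℂ) S * z i ^ 2).im = 0 := by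
          nlinarith [sq_nonneg (((starRingEnd ℂ) S * z i ^ 2).im)]
        apply Complex.ext
        · rw [h1]; simp
        · rw [him]; simp
      have hcs : (starRingEnd ℂ) S ≠ 0 := by
        intro h
        apply hS0
        simpa using congrArg (starRingEnd ℂ) h
      have hsq : ∀ i j : Fin d, z i ^ 2 = z j ^ 2 := by
        intro i j
        exact mul_left_cancel₀ hcs ((hall i).trans (hall j).symm)
      have hi0 : (0:ℕ) < d := by omega
      set i0 : Fin d := ⟨0, hi0⟩ with hi0def
      have hz0 : z i0 ≠ 0 := by
        intro h
        have h4 := hall i0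
        rw [h, ] at h4
        simp at h4
        have : (d:ℝ) = 0 := by exact_mod_cast h4.symm
        linarith
      have hor : ∀ i : Fin d, z i = z i0 ∨ z i = - z i0 := by
        intro i
        have h := hsq i i0
        have h5 : (z i - z i0) * (z i + z i0) = 0 := by linear_combination h
        rcases mul_eq_zero.mp h5 with h1 | h1
        · left; exact sub_eq_zero.mp h1
        · right; exact eq_neg_of_add_eq_zero_left h1
      set P := Finset.univ.filter (fun i : Fin d => z i = z i0) with hP
      set Q := Finset.univ.filter (fun i : Fin d => ¬ z i = z i0) with hQ
      have h1 : ∑ i ∈ P, z i = (P.card : ℂ) * z i0 := by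
        rw [Finset.sum_congr rfl (fun i hi => (Finset.mem_filter.mp hi).2)]
        rw [Finset.sum_const, nsmul_eq_mul]
      have h2 : ∑ i ∈ Q, z i = -((Q.card : ℂ) * z i0) := by
        have : ∀ i ∈ Q, z i = - z i0 := by
          intro i hi
          rcases hor i with h | h
          · exact absurd h (Finset.mem_filter.mp hi).2
          · exact h
        rw [Finset.sum_congr rfl this, Finset.sum_const, nsmul_eq_mul]
        ring
      have hbsplit : b = ((P.card : ℂ) - (Q.card : ℂ)) * z i0 := by
        rw [hb, ← Finset.sum_filter_add_sum_filter_not Finset.univ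
          (fun i : Fin d => z i = z i0) z, ← hP, ← hQ, h1, h2]
        ring
      have hcard : P.card + Q.card = d := by
        rw [hP, hQ]
        rw [Finset.card_filter_add_card_filter_not]
        simp
      rw [hb0] at hbsplit
      have h6 : ((P.card : ℂ) - (Q.card : ℂ)) = 0 := by
        rcases mul_eq_zero.mp hbsplit.symm with h | h
        · exact h
        · exact absurd h hz0
      have h7 : (P.card : ℂ) = (Q.card : ℂ) := by linear_combination h6
      have h8 : P.card = Q.card := by exact_mod_cast h7
      obtain ⟨m, hm⟩ := hdo
      omega
    calc ‖(1 + (s:ℂ)) * S‖ = (1 + s) * ‖S‖ := by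
          rw [norm_mul]
          congr 1
          rw [show (1 + (s:ℂ)) = (((1+s:ℝ)):ℂ) by push_cast; ring, Complex.norm_real,
            Real.norm_eq_abs, abs_of_pos hs1]
      _ < (1 + s) * d := mul_lt_mul_of_pos_left key hs1
  · -- case `∑ z ≠ 0`
    have hdC : (d:ℂ) ≠ 0 := Nat.cast_ne_zero.mpr (by omega)
    set c : ℂ := b / d with hc
    set w : ℂ := ∑ i, (z i - c)^2 with hw
    have hwS : w = S - b^2 / d := by
      rw [hw]
      rw [Finset.sum_congr rfl
        (fun i _ => show (z i - c)^2 = z i^2 - (2*c) * z i + c^2 from by ring)]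
      rw [Finset.sum_add_distrib, Finset.sum_sub_distrib, ← Finset.mul_sum,
        Finset.sum_const, Finset.card_univ, Fintype.card_fin, ← hS, ← hb, hc]
      field_simp
      linear_combination (b^2 * ((d:ℂ)*(d:ℂ)⁻¹ + 1)) * mul_inv_cancel₀ hdC
    have hkey : (1 + (s:ℂ)) * S - b^2 = ((1+s:ℝ):ℂ) * w + (((1+s-d)/d : ℝ):ℂ) * b^2 := by
      rw [hwS]
      push_cast
      field_simp
      ring
    have hB : 0 < Complex.normSq b := Complex.normSq_pos.mpr hb0
    set t : ℝ := Complex.normSq b / d with ht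
    have htpos : 0 < t := div_pos hB hdpos
    have hWle : ‖w‖ ≤ (d:ℝ) - t := by
      have h1 : ‖w‖ ≤ ∑ i, Complex.normSq (z i - c) := by
        calc ‖w‖ ≤ ∑ i, ‖(z i - c)^2‖ := norm_sum_le _ _
          _ = ∑ i, Complex.normSq (z i - c) := by
              apply Finset.sum_congr rfl
              intro i _
              rw [norm_pow, ← Complex.sq_norm]
      have h2 : ∑ i, Complex.normSq (z i - c)
          = (∑ i, Complex.normSq (z i)) - t := by
        rw [Finset.sum_congr rfl (fun i _ => Complex.normSq_sub (z i) c)]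
        rw [Finset.sum_sub_distrib, Finset.sum_add_distrib, Finset.sum_const,
          Finset.card_univ, Fintype.card_fin]
        have h3 : ∑ i, 2 * (z i * (starRingEnd ℂ) c).re
            = 2 * ((b * (starRingEnd ℂ) c).re) := by
          rw [← Finset.mul_sum, ← Complex.re_sum, ← Finset.sum_mul, ← hb]
        have h4 : (b * (starRingEnd ℂ) c).re = Complex.normSq b / d := by
          rw [hc, map_div₀]
          rw [show (starRingEnd ℂ) (d:ℂ) = (d:ℂ) from Complex.conj_natCast d]
          rw [show b * ((starRingEnd ℂ) b / (d:ℂ)) = b * (starRingEnd ℂ) b / (d:ℂ) from by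
            ring, Complex.mul_conj]
          rw [show ((Complex.normSq b : ℂ) / ((d:ℕ):ℂ)) = (((Complex.normSq b / d : ℝ)):ℂ) from
            by push_cast; ring]
          exact Complex.ofReal_re _
        have h5 : Complex.normSq c = Complex.normSq b / (d:ℝ)^2 := by
          rw [hc, map_div₀]
          congr 1
          rw [Complex.normSq_natCast]
          ring
        rw [h3, h4, h5, ht]
        field_simp
        linear_combination (Complex.normSq b * ((d:ℝ)*(d:ℝ)⁻¹ + 1)) * mul_inv_cancel₀ hdpos.ne'
      calc ‖w‖ ≤ ∑ i, Complex.normSq (z i - c) := h1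
        _ = (∑ i, Complex.normSq (z i)) - t := h2
        _ ≤ (d:ℝ) - t := by linarith
    rw [hkey]
    have ha : ‖((1+s:ℝ):ℂ) * w + (((1+s-d)/d : ℝ):ℂ) * b^2‖
        ≤ (1+s) * ‖w‖ + |1+s-(d:ℝ)| * t := by
      calc ‖((1+s:ℝ):ℂ) * w + (((1+s-d)/d : ℝ):ℂ) * b^2‖
          ≤ ‖((1+s:ℝ):ℂ) * w‖ + ‖(((1+s-d)/d : ℝ):ℂ) * b^2‖ :=
            norm_add_le _ _
        _ = |1+s| * ‖w‖ + |(1+s-(d:ℝ))/d| * (‖b‖)^2 := by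
            rw [norm_mul, norm_mul, Complex.norm_real, Complex.norm_real, Real.norm_eq_abs, Real.norm_eq_abs, norm_pow]
        _ = (1+s) * ‖w‖ + |1+s-(d:ℝ)| * t := by
            rw [abs_of_pos hs1, abs_div, abs_of_pos hdpos, Complex.sq_norm, ht]
            ring
    have hc0 : |1+s-(d:ℝ)| < 1+s := abs_lt.mpr ⟨by linarith, by linarith⟩
    have habs0 : (0:ℝ) ≤ |1+s-(d:ℝ)| := abs_nonneg _
    nlinarith [mul_le_mul_of_nonneg_left hWle (le_of_lt hs1),
      mul_pos (show (0:ℝ) < 1+s-|1+s-(d:ℝ)| from by linarith) htpos]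
end

section
/- Let $d \ge 2$, let $v_1, \ldots, v_d$ be unit vectors in $\mathbb{R}^2$ with $\sum_{i=1}^d v_i = 0$, and define $T_i = \begin{bmatrix} 0 & v_i^\top & 0 \\ 0 & 0 & v_i \\ 0 & 0 & 0 \end{bmatrix} \in \mathbb{R}^{4 \times 4}$. Then the $T_i$ are pairwise commuting contractions with $T_i T_j = \langle v_i, v_j \rangle\, e_1 e_4^\top$ for all $i,j$, $\sum_{i=1}^d T_i = 0$, and for $p(z) = (1+s)\sum_m z_m^2 - (\sum_m z_m)^2$ one has $p(T_1, \ldots, T_d) e_4 = (1+s) d\, e_1$. -/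
open scoped Matrix.Norms.L2Operator

set_option maxHeartbeats 1000000 in
private lemma l2_opNorm_le_one_of_sq (A : Matrix (Fin 4) (Fin 4) ℝ)
    (h : ∀ x : Fin 4 → ℝ, ∑ i, (A.mulVec x i) ^ 2 ≤ ∑ i, (x i) ^ 2) : ‖A‖ ≤ 1 := by
  rw [Matrix.l2_opNorm_def]
  apply ContinuousLinearMap.opNorm_le_bound _ zero_le_one
  intro x
  rw [one_mul]
  have hx : ((Matrix.toEuclideanLin ≪≫ₗ LinearMap.toContinuousLinearMap) A) x =
      (WithLp.equiv 2 (Fin 4 → ℝ)).symm (A.mulVec (WithLp.equiv 2 (Fin 4 → ℝ) x)) := rfl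
  rw [hx]
  rw [EuclideanSpace.norm_eq, EuclideanSpace.norm_eq]
  apply Real.sqrt_le_sqrt
  simpa [sq_abs] using h (WithLp.equiv 2 (Fin 4 → ℝ) x)

/-- For unit vectors `v₁,…,v_d ∈ ℝ²` with zero sum, the matrices
`Tᵢ = [0 vᵢᵀ 0; 0 0 vᵢ; 0 0 0] ∈ ℝ^{4×4}` are pairwise commuting contractions
with `Tᵢ Tⱼ = ⟨vᵢ, vⱼ⟩ e₁ e₄ᵀ`, `∑ Tᵢ = 0`, and
`p(T₁,…,T_d) e₄ = (1+s) d e₁` for `p(z) = (1+s) ∑ z_m² - (∑ z_m)²`. -/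
theorem kvh_tuple_properties {d : ℕ} (hd : 2 ≤ d) (s : ℝ)
    (v : Fin d → Fin 2 → ℝ)
    (hunit : ∀ i, v i 0 ^ 2 + v i 1 ^ 2 = 1)
    (hsum : ∀ c, ∑ i, v i c = 0)
    (T : Fin d → Matrix (Fin 4) (Fin 4) ℝ)
    (hT : ∀ i, T i = !![0, v i 0, v i 1, 0;
                       0, 0,     0,     v i 0;
                       0, 0,     0,     v i 1;
                       0, 0,     0,     0]) :
    (∀ i j, T i * T j = T j * T i) ∧
    (∀ i, ‖T i‖ ≤ 1) ∧
    (∀ i j, T i * T j =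
      (v i 0 * v j 0 + v i 1 * v j 1) • Matrix.single (0 : Fin 4) (3 : Fin 4) (1 : ℝ)) ∧
    (∑ i, T i = 0) ∧
    ((((1 + s) • ∑ m, (T m) ^ 2 - (∑ m, T m) ^ 2).mulVec (Pi.single (3 : Fin 4) 1)) =
      ((1 + s) * d) • (Pi.single (0 : Fin 4) 1 : Fin 4 → ℝ)) := by
  have hTT : ∀ i j, T i * T j =
      (v i 0 * v j 0 + v i 1 * v j 1) • Matrix.single (0 : Fin 4) (3 : Fin 4) (1 : ℝ) := by
    intro i j
    rw [hT i, hT j]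
    ext a b
    fin_cases a <;> fin_cases b <;>
      simp [Matrix.mul_apply, Fin.sum_univ_four, Matrix.single, Matrix.vecHead, Matrix.vecTail]
  have hcomm : ∀ i j, T i * T j = T j * T i := by
    intro i j
    rw [hTT i j, hTT j i]
    ring_nf
  have hnorm : ∀ i, ‖T i‖ ≤ 1 := by
    intro i
    apply l2_opNorm_le_one_of_sq
    intro x
    have h1 := hunit i
    rw [hT i]
    simp only [Matrix.mulVec, dotProduct, Fin.sum_univ_four]
    simp [Matrix.vecHead, Matrix.vecTail]
    nlinarith [sq_nonneg (v i 0 * x 2 - v i 1 * x 1), sq_nonneg (x 0), sq_nonneg (x 3),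
      sq_nonneg (v i 0 * x 3), sq_nonneg (v i 1 * x 3)]
  have hzero : ∑ i, T i = 0 := by
    ext a b
    simp only [Matrix.sum_apply, hT, Matrix.zero_apply]
    fin_cases a <;> fin_cases b <;> simp [hsum 0, hsum 1, Matrix.vecHead, Matrix.vecTail]
  refine ⟨hcomm, hnorm, hTT, hzero, ?_⟩
  have hE : ∀ m, (T m) ^ 2 = Matrix.single (0 : Fin 4) (3 : Fin 4) (1 : ℝ) := by
    intro m
    rw [sq, hTT m m]
    have h1 := hunit m
    rw [show v m 0 * v m 0 + v m 1 * v m 1 = 1 by nlinarith, one_smul]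
  have hsq : ∑ m, (T m) ^ 2 = (d : ℝ) • Matrix.single (0 : Fin 4) (3 : Fin 4) (1 : ℝ) := by
    rw [Finset.sum_congr rfl (fun m _ => hE m), Finset.sum_const, Finset.card_univ,
      Fintype.card_fin]
    ext a b
    simp [Matrix.single, mul_comm]
  rw [hsq, hzero]
  funext k
  fin_cases k <;>
    simp [Matrix.mulVec, dotProduct, Matrix.single, Fin.sum_univ_four,
      Pi.single_apply, smul_smul, mul_comm, mul_assoc, Matrix.vecHead, Matrix.vecTail]
end

section
/- Let $a \in \mathbb{C}$ with $\sqrt{2} - 1 < |a| \le 1$, and $p(z) = (1 - az)^2$ a one-variable polynomial. Then $p(z) = \det(I_2 - aI_2 \cdot zI_2)$ with $\|a I_2\| = |a| \le 1$, yet $\sup_{|z| \le 1} |1 - p(z)| = 2|a| + |a|^2 > 1$. -/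
open scoped Matrix.Norms.L2Operator

/-- For `√2 - 1 < |a| ≤ 1`, the polynomial `p(z) = (1 - a z)²` admits the
determinantal representation `p(z) = det (I₂ - (a I₂)(z I₂))` with
`‖a I₂‖ = |a| ≤ 1`, and yet `sup_{|z| ≤ 1} |1 - p(z)| = 2|a| + |a|² > 1`. -/
theorem contractive_rep_does_not_imply_schur_agler (a : ℂ)
    (h1 : Real.sqrt 2 - 1 < ‖a‖) (h2 : ‖a‖ ≤ 1) :
    (∀ z : ℂ, (1 - a * z) ^ 2 =
        (1 - a • (1 : Matrix (Fin 2) (Fin 2) ℂ) * z • (1 : Matrix (Fin 2) (Fin 2) ℂ)).det) ∧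
      ‖a • (1 : Matrix (Fin 2) (Fin 2) ℂ)‖ = ‖a‖ ∧
      IsGreatest
        {x : ℝ | ∃ z : ℂ, ‖z‖ ≤ 1 ∧ x = ‖1 - (1 - a * z) ^ 2‖}
        (2 * ‖a‖ + ‖a‖ ^ 2) ∧
      1 < 2 * ‖a‖ + ‖a‖ ^ 2 := by
  have hs : (1:ℝ) < Real.sqrt 2 := by
    have : Real.sqrt 1 < Real.sqrt 2 := Real.sqrt_lt_sqrt (by norm_num) (by norm_num)
    simpa using this
  have ha : (0:ℝ) < ‖a‖ := lt_trans (by linarith) h1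
  refine ⟨fun z => ?_, ?_, ⟨?_, ?_⟩, ?_⟩
  · simp [Matrix.det_fin_two, Matrix.one_apply]
    ring
  · rw [norm_smul]
    simp
  · refine ⟨-(starRingEnd ℂ a) / (‖a‖ : ℂ), ?_, ?_⟩
    · rw [norm_div, norm_neg, Complex.norm_conj, Complex.norm_of_nonneg ha.le, div_self ha.ne']
    · have haz : a * (-(starRingEnd ℂ a) / (‖a‖ : ℂ)) = -(‖a‖ : ℂ) := by
        have hc : (‖a‖ : ℂ) ≠ 0 := Complex.ofReal_ne_zero.mpr ha.ne'
        field_simp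
        rw [Complex.mul_conj, Complex.normSq_eq_norm_sq]
        push_cast
        ring
      rw [haz]
      have : (1:ℂ) - (1 - -(‖a‖ : ℂ)) ^ 2
          = -((2 * ‖a‖ + ‖a‖ ^ 2 : ℝ) : ℂ) := by
        push_cast; ring
      rw [this, norm_neg, Complex.norm_of_nonneg (by positivity)]
  · rintro x ⟨z, hz, rfl⟩
    have h : (1:ℂ) - (1 - a * z) ^ 2 = 2 * (a * z) - (a * z) ^ 2 := by ring
    rw [h]
    have hb : ‖2 * (a * z) - (a * z) ^ 2‖
        ≤ 2 * (‖a‖ * ‖z‖) + (‖a‖ * ‖z‖) ^ 2 := by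
      have t1 : ‖2 * (a * z)‖ = 2 * (‖a‖ * ‖z‖) := by
        rw [norm_mul, norm_mul]; norm_num
      have t2 : ‖(a * z) ^ 2‖ = (‖a‖ * ‖z‖) ^ 2 := by
        rw [norm_pow, norm_mul]
      have hb := norm_sub_le_norm_sub_add_norm_sub (2 * (a * z)) 0 ((a * z) ^ 2)
      simp only [sub_zero, zero_sub, norm_neg] at hb
      rw [t1, t2] at hb
      exact hb
    have hr : ‖a‖ * ‖z‖ ≤ ‖a‖ :=
      mul_le_of_le_one_right (norm_nonneg a) hz
    nlinarith [norm_nonneg z, norm_nonneg a,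
      mul_nonneg (norm_nonneg a) (norm_nonneg z)]
  · nlinarith [Real.sq_sqrt (by norm_num : (0:ℝ) ≤ 2), Real.sqrt_nonneg 2]
end

section
/- Let $p(z) = 1 + \sum_{k \in S} p_k z^k$ be a $d$-variable polynomial with $S \subseteq \mathbb{N}_0^d \setminus \{0\}$ finite and all $p_k \neq 0$, let $t = \mathrm{tdeg}\, p$ and $\beta = (\sum_{k \in S} |p_k|)^{1/(t+1)}$. If $\beta \le 1$, then $p$ admits a determinantal representation $p(z) = \det(I_{|n|} - K Z_n)$ with $n = \sum_{k \in S} k$ and $\|K\| \le \beta$. -/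
open scoped Matrix.Norms.L2Operator
namespace DetRepAux
open Matrix

variable {d : ℕ}

abbrev Mdeg (k : Fin d → ℕ) : ℕ := ∑ i, k i
abbrev Jt (S : Finset (Fin d → ℕ)) := (k : {x // x ∈ S}) × Fin (Mdeg k.1)
abbrev It (S : Finset (Fin d → ℕ)) := (i : Fin d) × Fin (∑ k ∈ S, k i)

noncomputable def σe (k : Fin d → ℕ) : Fin (Mdeg k) ≃ ((i : Fin d) × Fin (k i)) :=
  Fintype.equivOfCardEq (by simp [Mdeg])

noncomputable def wv (k : Fin d → ℕ) (j : Fin (Mdeg k)) : Fin d := (σe k j).1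

lemma prod_word (k : Fin d → ℕ) (z : Fin d → ℂ) :
    ∏ j : Fin (Mdeg k), z (wv k j) = ∏ i, z i ^ k i := by
  calc ∏ j : Fin (Mdeg k), z (wv k j)
      = ∏ p : (i : Fin d) × Fin (k i), z p.1 :=
        Equiv.prod_comp (σe k) (fun p : (i : Fin d) × Fin (k i) => z p.1)
    _ = ∏ i, ∏ _j : Fin (k i), z i := by rw [← Finset.univ_sigma_univ, Finset.prod_sigma]
    _ = ∏ i, z i ^ k i := by simp

noncomputable def fibEquiv (S : Finset (Fin d → ℕ)) (i : Fin d) :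
    ((k : {x // x ∈ S}) × Fin (k.1 i)) ≃ Fin (∑ k ∈ S, k i) :=
  Fintype.equivOfCardEq (by
    simp only [Fintype.card_sigma, Fintype.card_fin]
    exact Finset.sum_attach S fun k => k i)

def sigmaSwap {K L : Type*} (F : K → L → Type*) :
    ((k : K) × (l : L) × F k l) ≃ ((l : L) × (k : K) × F k l) where
  toFun x := ⟨x.2.1, x.1, x.2.2⟩
  invFun y := ⟨y.2.1, y.1, y.2.2⟩
  left_inv _ := rfl
  right_inv _ := rfl

noncomputable def eqv (S : Finset (Fin d → ℕ)) : Jt S ≃ It S :=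
  ((Equiv.sigmaCongrRight (fun k : {x // x ∈ S} => σe k.1)).trans
    (sigmaSwap (fun (k : {x // x ∈ S}) (i : Fin d) => Fin (k.1 i)))).trans
    (Equiv.sigmaCongrRight (fun i => fibEquiv S i))

lemma eqv_fst (S : Finset (Fin d → ℕ)) (x : Jt S) : (eqv S x).1 = wv x.1.1 x.2 := rfl

variable (S : Finset (Fin d → ℕ))

noncomputable def av (α : {x // x ∈ S} → ℂ) : Jt S → ℂ :=
  fun x => if (x.2 : ℕ) + 1 = Mdeg x.1.1 then α x.1 else 0

noncomputable def bv (γ : {x // x ∈ S} → ℂ) : Jt S → ℂ :=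
  fun x => if (x.2 : ℕ) = 0 then γ x.1 else 0

noncomputable def Nm (β : ℝ) : Matrix (Jt S) (Jt S) ℂ :=
  Matrix.of fun x y => if x.1 = y.1 ∧ (y.2 : ℕ) = (x.2 : ℕ) + 1 then (β : ℂ) else 0

noncomputable def Kb (α γ : {x // x ∈ S} → ℂ) (β : ℝ) : Matrix (Jt S) (Jt S) ℂ :=
  Matrix.vecMulVec (av S α) (bv S γ) + Nm S β

noncomputable def tp (z : Fin d → ℂ) (k : Fin d → ℕ) (m : ℕ) : ℂ :=
  ∏ l : Fin (Mdeg k), if m ≤ (l : ℕ) then z (wv k l) else 1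

lemma tp_zero (z : Fin d → ℂ) (k : Fin d → ℕ) : tp z k 0 = ∏ i, z i ^ k i := by
  rw [← prod_word k z, tp]
  exact Finset.prod_congr rfl fun l _ => if_pos (Nat.zero_le _)

lemma tp_top (z : Fin d → ℂ) (k : Fin d → ℕ) : tp z k (Mdeg k) = 1 :=
  Finset.prod_eq_one fun l _ => if_neg (Nat.not_le.mpr l.isLt)

lemma tp_succ (z : Fin d → ℂ) (k : Fin d → ℕ) {m : ℕ} (h : m < Mdeg k) :
    tp z k m = z (wv k ⟨m, h⟩) * tp z k (m + 1) := by
  rw [tp, ← Finset.mul_prod_erase Finset.univ _ (Finset.mem_univ (⟨m, h⟩ : Fin (Mdeg k))),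
    if_pos (le_refl m), tp,
    ← Finset.mul_prod_erase Finset.univ _ (Finset.mem_univ (⟨m, h⟩ : Fin (Mdeg k)))]
  have : (if m + 1 ≤ ((⟨m, h⟩ : Fin (Mdeg k)) : ℕ) then z (wv k ⟨m, h⟩) else 1) = 1 :=
    if_neg (by simp)
  rw [this, one_mul]
  congr 1
  refine Finset.prod_congr rfl fun l hl => ?_
  have hlm : (l : ℕ) ≠ m := by
    intro hh
    exact (Finset.mem_erase.mp hl).1 (Fin.ext hh)
  by_cases h2 : m ≤ (l : ℕ)
  · rw [if_pos h2, if_pos (by omega)]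
  · rw [if_neg h2, if_neg (by omega)]

noncomputable def yv (α : {x // x ∈ S} → ℂ) (β : ℝ) (z : Fin d → ℂ) : Jt S → ℂ :=
  fun x => α x.1 * (β : ℂ) ^ (Mdeg x.1.1 - 1 - (x.2 : ℕ)) * tp z x.1.1 ((x.2 : ℕ) + 1)

lemma Nm_mulVec (β : ℝ) (g : Jt S → ℂ) (x : Jt S) :
    (Nm S β *ᵥ g) x =
      if h : (x.2 : ℕ) + 1 < Mdeg x.1.1 then (β : ℂ) * g ⟨x.1, ⟨(x.2 : ℕ) + 1, h⟩⟩ else 0 := by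
  rw [Matrix.mulVec, dotProduct]
  split_ifs with h
  · rw [Finset.sum_eq_single (⟨x.1, ⟨(x.2 : ℕ) + 1, h⟩⟩ : Jt S)]
    · rw [Nm, Matrix.of_apply, if_pos ⟨rfl, rfl⟩]
    · rintro ⟨yk, yj⟩ - hne
      rw [Nm, Matrix.of_apply]
      rw [if_neg, zero_mul]
      rintro ⟨h1, h2⟩
      apply hne
      subst h1
      exact congrArg _ (Fin.ext h2)
    · intro hmem; exact absurd (Finset.mem_univ _) hmem
  · refine Finset.sum_eq_zero fun y _ => ?_
    rw [Nm, Matrix.of_apply, if_neg, zero_mul]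
    rintro ⟨h1, h2⟩
    have h3 := y.2.isLt
    have h4 : Mdeg y.1.1 = Mdeg x.1.1 := by rw [h1]
    omega


lemma mulVec_yv (α : {x // x ∈ S} → ℂ) (β : ℝ) (z : Fin d → ℂ) :
    (1 - Nm S β * Matrix.diagonal (fun x : Jt S => z (wv x.1.1 x.2))) *ᵥ yv S α β z
      = av S α := by
  funext x
  rw [Matrix.sub_mulVec, Matrix.one_mulVec, ← Matrix.mulVec_mulVec, Pi.sub_apply, Nm_mulVec]
  by_cases h : (x.2 : ℕ) + 1 < Mdeg x.1.1
  · rw [dif_pos h]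
    have hd : (Matrix.diagonal (fun x : Jt S => z (wv x.1.1 x.2)) *ᵥ yv S α β z)
        ⟨x.1, ⟨(x.2:ℕ)+1, h⟩⟩
        = z (wv x.1.1 ⟨(x.2:ℕ)+1, h⟩) * yv S α β z ⟨x.1, ⟨(x.2:ℕ)+1, h⟩⟩ :=
      Matrix.mulVec_diagonal _ _ _
    rw [hd]
    simp only [av, yv]
    rw [tp_succ z x.1.1 h]
    have he : Mdeg x.1.1 - 1 - (x.2:ℕ) = (Mdeg x.1.1 - 1 - ((x.2:ℕ)+1)) + 1 := by omega
    rw [he, pow_succ, if_neg (by omega)]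
    ring
  · rw [dif_neg h]
    have hlast : (x.2:ℕ) + 1 = Mdeg x.1.1 := by have := x.2.isLt; omega
    simp only [av, yv]
    rw [hlast, tp_top, if_pos rfl]
    have h0 : Mdeg x.1.1 - 1 - (x.2:ℕ) = 0 := by omega
    rw [h0, pow_zero]
    ring

lemma det_one_sub_Nm (β : ℝ) (z : Fin d → ℂ) :
    (1 - Nm S β * Matrix.diagonal (fun x : Jt S => z (wv x.1.1 x.2))).det = 1 := by
  have hbt : (1 - Nm S β * Matrix.diagonal
      (fun x : Jt S => z (wv x.1.1 x.2))).BlockTriangular (fun x : Jt S => (x.2 : ℕ)) := by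
    intro u v huv
    have huv' : (v.2 : ℕ) < (u.2 : ℕ) := huv
    have hne : u ≠ v := fun h => by subst h; exact lt_irrefl _ huv
    rw [Matrix.sub_apply, Matrix.one_apply_ne hne, Matrix.mul_diagonal, Nm, Matrix.of_apply,
      if_neg, zero_mul, sub_zero]
    rintro ⟨h1, h2⟩
    omega
  rw [hbt.det]
  refine Finset.prod_eq_one fun a _ => ?_
  have hblock : ((1 - Nm S β * Matrix.diagonal fun x : Jt S => z (wv x.1.1 x.2)).toSquareBlock
      (fun x : Jt S => (x.2:ℕ)) a) = 1 := by
    ext ⟨x, hx⟩ ⟨y, hy⟩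
    have hNm : (Nm S β * Matrix.diagonal fun x : Jt S => z (wv x.1.1 x.2)) x y = 0 := by
      rw [Matrix.mul_diagonal, Nm, Matrix.of_apply, if_neg, zero_mul]
      rintro ⟨h1, h2⟩
      omega
    simp only [Matrix.toSquareBlock_def, Matrix.of_apply, Matrix.sub_apply, hNm, sub_zero,
      Matrix.one_apply, Subtype.mk.injEq]
  rw [hblock, Matrix.det_one]

lemma mul_vecMulVec {n : Type*} [Fintype n] (A : Matrix n n ℂ) (u v : n → ℂ) :
    A * Matrix.vecMulVec u v = Matrix.vecMulVec (A *ᵥ u) v := by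
  ext x y
  simp only [Matrix.mul_apply, Matrix.vecMulVec_apply, Matrix.mulVec, dotProduct,
    Finset.sum_mul]
  exact Finset.sum_congr rfl fun c _ => by ring

lemma det_Kb (α γ : {x // x ∈ S} → ℂ) (β : ℝ) (hM : ∀ k : {x // x ∈ S}, 0 < Mdeg k.1)
    (z : Fin d → ℂ) :
    (1 - Kb S α γ β * Matrix.diagonal (fun x : Jt S => z (wv x.1.1 x.2))).det
      = 1 - ∑ k : {x // x ∈ S},
          α k * γ k * (β : ℂ) ^ (Mdeg k.1 - 1) * ∏ i, z i ^ k.1 i := by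
  set D := Matrix.diagonal (fun x : Jt S => z (wv x.1.1 x.2)) with hD
  set v' : Jt S → ℂ := fun y => bv S γ y * z (wv y.1.1 y.2) with hv'
  have h1 : 1 - Kb S α γ β * D = (1 - Nm S β * D) * (1 - Matrix.vecMulVec (yv S α β z) v') := by
    have e1 : (1 - Nm S β * D) * (1 - Matrix.vecMulVec (yv S α β z) v')
        = 1 - Nm S β * D - Matrix.vecMulVec ((1 - Nm S β * D) *ᵥ yv S α β z) v' := by
      rw [Matrix.mul_sub, Matrix.mul_one, mul_vecMulVec]
    have e2 : (1 - Nm S β * D) *ᵥ yv S α β z = av S α := by rw [hD]; exact mulVec_yv S α β z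
    rw [e1, e2]
    have hvv : Matrix.vecMulVec (av S α) (bv S γ) * D = Matrix.vecMulVec (av S α) v' := by
      ext x y
      rw [hD, Matrix.mul_diagonal, Matrix.vecMulVec_apply, Matrix.vecMulVec_apply]
      simp only [hv']
      ring
    rw [Kb, Matrix.add_mul, hvv]
    abel
  have h2 : (1 - Matrix.vecMulVec (yv S α β z) v').det = 1 - v' ⬝ᵥ yv S α β z := by
    have e : (1 : Matrix (Jt S) (Jt S) ℂ) - Matrix.vecMulVec (yv S α β z) v'
        = 1 + Matrix.replicateCol Unit (-(yv S α β z)) * Matrix.replicateRow Unit v' := by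
      rw [← Matrix.vecMulVec_eq (ι := Unit)]
      have e3 : Matrix.vecMulVec (-(yv S α β z)) v' = -(Matrix.vecMulVec (yv S α β z) v') := by
        ext x y; simp [Matrix.vecMulVec_apply]
      rw [e3]; abel
    rw [e, Matrix.det_one_add_replicateCol_mul_replicateRow, dotProduct_neg, ← sub_eq_add_neg]
  have h3 : v' ⬝ᵥ yv S α β z = ∑ k : {x // x ∈ S},
      α k * γ k * (β:ℂ)^(Mdeg k.1 - 1) * ∏ i, z i ^ k.1 i := by
    rw [dotProduct, ← Finset.univ_sigma_univ, Finset.sum_sigma]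
    refine Finset.sum_congr rfl fun k _ => ?_
    rw [Finset.sum_eq_single (⟨0, hM k⟩ : Fin (Mdeg k.1))]
    · simp only [hv', bv, yv, if_pos rfl]
      have hz : z (wv k.1 ⟨0, hM k⟩) * tp z k.1 (0 + 1) = ∏ i, z i ^ k.1 i := by
        rw [← tp_succ z k.1 (hM k), tp_zero]
      have : Mdeg k.1 - 1 - ((⟨0, hM k⟩ : Fin (Mdeg k.1)) : ℕ) = Mdeg k.1 - 1 := by simp
      rw [this]
      calc γ k * z (wv k.1 ⟨0, hM k⟩)
            * (α k * (β:ℂ) ^ (Mdeg k.1 - 1) * tp z k.1 ((⟨0, hM k⟩ : Fin (Mdeg k.1)) + 1))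
          = α k * γ k * (β:ℂ) ^ (Mdeg k.1 - 1)
            * (z (wv k.1 ⟨0, hM k⟩) * tp z k.1 (0 + 1)) := by ring
        _ = _ := by rw [hz]
    · intro j _ hj
      have : ((j : ℕ) = 0) = False := by
        simp only [eq_iff_iff, iff_false]
        intro h0
        exact hj (Fin.ext h0)
      simp [hv', bv, this]
    · intro hmem; exact absurd (Finset.mem_univ _) hmem
  rw [h1, Matrix.det_mul, det_one_sub_Nm, one_mul, h2, h3]


lemma Kb_mulVec (α γ : {x // x ∈ S} → ℂ) (β : ℝ) (u : Jt S → ℂ) (x : Jt S) :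
    (Kb S α γ β *ᵥ u) x = av S α x * (bv S γ ⬝ᵥ u)
      + (if h : (x.2 : ℕ) + 1 < Mdeg x.1.1 then (β : ℂ) * u ⟨x.1, ⟨(x.2 : ℕ) + 1, h⟩⟩
          else 0) := by
  rw [Kb, Matrix.add_mulVec, Pi.add_apply, Nm_mulVec]
  congr 1
  simp only [Matrix.mulVec, dotProduct, Matrix.vecMulVec_apply, Finset.mul_sum]
  exact Finset.sum_congr rfl fun y _ => by ring

lemma sum_sq_le (α γ : {x // x ∈ S} → ℂ) (β : ℝ) (hβ0 : 0 ≤ β)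
    (hM : ∀ k : {x // x ∈ S}, 0 < Mdeg k.1)
    (hα : ∑ k : {x // x ∈ S}, ‖α k‖ ^ 2 ≤ β)
    (hγ : ∑ k : {x // x ∈ S}, ‖γ k‖ ^ 2 ≤ β)
    (u : Jt S → ℂ) :
    ∑ x : Jt S, ‖(Kb S α γ β *ᵥ u) x‖ ^ 2
      ≤ β ^ 2 * ∑ x : Jt S, ‖u x‖ ^ 2 := by
  classical
  set s : ℂ := bv S γ ⬝ᵥ u with hs
  set U : {x // x ∈ S} → ℕ → ℝ := fun k m =>
    if hm : m < Mdeg k.1 then ‖u ⟨k, ⟨m, hm⟩⟩‖ ^ 2 else 0 with hU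
  have hU0 : ∀ k m, 0 ≤ U k m := by
    intro k m; rw [hU]; dsimp only; split <;> positivity
  have hpt : ∀ x : Jt S, ‖(Kb S α γ β *ᵥ u) x‖ ^ 2
      = ‖av S α x‖ ^ 2 * ‖s‖ ^ 2 + β ^ 2 * U x.1 ((x.2 : ℕ) + 1) := by
    intro x
    rw [Kb_mulVec, ← hs]
    by_cases h : (x.2 : ℕ) + 1 < Mdeg x.1.1
    · have hav : av S α x = 0 := if_neg (by omega)
      have hUx : U x.1 ((x.2 : ℕ) + 1) = ‖u ⟨x.1, ⟨(x.2 : ℕ) + 1, h⟩⟩‖ ^ 2 :=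
        dif_pos h
      rw [dif_pos h, hav, hUx, zero_mul, zero_add, norm_mul, mul_pow, norm_zero,
        Complex.norm_real, Real.norm_of_nonneg hβ0]
      ring
    · have hUx : U x.1 ((x.2 : ℕ) + 1) = 0 := dif_neg h
      rw [dif_neg h, add_zero, hUx, mul_zero, add_zero, norm_mul, mul_pow]
  have hblock1 : ∀ k : {x // x ∈ S}, ∑ j : Fin (Mdeg k.1), U k ((j : ℕ) + 1)
      = ∑ m ∈ Finset.Ico 1 (Mdeg k.1), U k m := by
    intro k
    rw [Fin.sum_univ_eq_sum_range (fun m => U k (m + 1)) (Mdeg k.1)]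
    have h1 : ∑ m ∈ Finset.Ico 1 (Mdeg k.1 + 1), U k m
        = ∑ m ∈ Finset.range (Mdeg k.1), U k (m + 1) := by
      rw [Finset.sum_Ico_eq_sum_range]
      simp only [Nat.add_sub_cancel]
      exact Finset.sum_congr rfl fun m _ => by rw [Nat.add_comm]
    have h2 : ∑ m ∈ Finset.Ico 1 (Mdeg k.1 + 1), U k m
        = ∑ m ∈ Finset.Ico 1 (Mdeg k.1), U k m + U k (Mdeg k.1) :=
      Finset.sum_Ico_succ_top (hM k) _
    have h3 : U k (Mdeg k.1) = 0 := dif_neg (lt_irrefl _)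
    rw [← h1, h2, h3, add_zero]
  have hblock2 : ∀ k : {x // x ∈ S}, ∑ j : Fin (Mdeg k.1), ‖u ⟨k, j⟩‖ ^ 2
      = U k 0 + ∑ m ∈ Finset.Ico 1 (Mdeg k.1), U k m := by
    intro k
    have hj : ∀ j : Fin (Mdeg k.1), ‖u ⟨k, j⟩‖ ^ 2 = U k (j : ℕ) := by
      intro j
      rw [hU]
      dsimp only
      rw [dif_pos j.isLt]
    simp_rw [hj]
    rw [Fin.sum_univ_eq_sum_range (fun m => U k m) (Mdeg k.1), Finset.range_eq_Ico,
      Finset.sum_eq_sum_Ico_succ_bot (hM k)]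
  have hs_eq : s = ∑ k : {x // x ∈ S}, γ k * u ⟨k, ⟨0, hM k⟩⟩ := by
    rw [hs, dotProduct, ← Finset.univ_sigma_univ, Finset.sum_sigma]
    refine Finset.sum_congr rfl fun k _ => ?_
    rw [Finset.sum_eq_single (⟨0, hM k⟩ : Fin (Mdeg k.1))]
    · simp [bv]
    · intro j _ hj
      have hj0 : ¬ ((j : ℕ) = 0) := fun h0 => hj (Fin.ext h0)
      simp only [bv, if_neg hj0, zero_mul]
    · intro hmem; exact absurd (Finset.mem_univ _) hmem
  have hsum_av : ∑ k : {x // x ∈ S}, ∑ j : Fin (Mdeg k.1), ‖av S α ⟨k, j⟩‖ ^ 2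
      = ∑ k : {x // x ∈ S}, ‖α k‖ ^ 2 := by
    refine Finset.sum_congr rfl fun k _ => ?_
    rw [Finset.sum_eq_single (⟨Mdeg k.1 - 1, by have := hM k; omega⟩ : Fin (Mdeg k.1))]
    · have hc : ((⟨Mdeg k.1 - 1, by have := hM k; omega⟩ : Fin (Mdeg k.1)) : ℕ) + 1
          = Mdeg k.1 := by
        have := hM k; simp; omega
      simp only [av, if_pos hc]
    · intro j _ hj
      have hc : ¬ ((j : ℕ) + 1 = Mdeg k.1) := by
        intro h0
        exact hj (Fin.ext (show (j:ℕ) = Mdeg k.1 - 1 by omega))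
      simp only [av, if_neg hc, norm_zero]
      ring
    · intro hmem; exact absurd (Finset.mem_univ _) hmem
  have habs_s : ‖s‖ ^ 2 ≤ β * ∑ k : {x // x ∈ S}, U k 0 := by
    have h1 : ‖s‖ ≤ ∑ k : {x // x ∈ S},
        ‖γ k‖ * ‖u ⟨k, ⟨0, hM k⟩⟩‖ := by
      rw [hs_eq]
      refine (norm_sum_le _ _).trans_eq ?_
      exact Finset.sum_congr rfl fun k _ => norm_mul _ _
    have h2 : ‖s‖ ^ 2 ≤ (∑ k : {x // x ∈ S},
        ‖γ k‖ * ‖u ⟨k, ⟨0, hM k⟩⟩‖) ^ 2 :=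
      pow_le_pow_left₀ (norm_nonneg _) h1 2
    have h3 := Finset.sum_mul_sq_le_sq_mul_sq Finset.univ
      (fun k : {x // x ∈ S} => ‖γ k‖)
      (fun k : {x // x ∈ S} => ‖u ⟨k, ⟨0, hM k⟩⟩‖)
    have h4 : ∑ k : {x // x ∈ S}, ‖u ⟨k, ⟨0, hM k⟩⟩‖ ^ 2
        = ∑ k : {x // x ∈ S}, U k 0 := by
      refine Finset.sum_congr rfl fun k _ => ?_
      rw [hU]; dsimp only; rw [dif_pos (hM k)]
    calc ‖s‖ ^ 2
        ≤ (∑ k : {x // x ∈ S}, ‖γ k‖ ^ 2)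
          * ∑ k : {x // x ∈ S}, ‖u ⟨k, ⟨0, hM k⟩⟩‖ ^ 2 := h2.trans h3
      _ ≤ β * ∑ k : {x // x ∈ S}, U k 0 := by
          rw [h4]
          refine mul_le_mul_of_nonneg_right hγ ?_
          exact Finset.sum_nonneg fun k _ => hU0 k 0
  have habs_s0 : 0 ≤ ‖s‖ ^ 2 := by positivity
  calc ∑ x : Jt S, ‖(Kb S α γ β *ᵥ u) x‖ ^ 2
      = (∑ k : {x // x ∈ S}, ‖α k‖ ^ 2) * ‖s‖ ^ 2
        + β ^ 2 * ∑ k : {x // x ∈ S}, ∑ m ∈ Finset.Ico 1 (Mdeg k.1), U k m := by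
        rw [Finset.sum_congr rfl fun x _ => hpt x, Finset.sum_add_distrib,
          ← Finset.univ_sigma_univ, Finset.sum_sigma, Finset.sum_sigma]
        congr 1
        · rw [← hsum_av, Finset.sum_mul]
          exact Finset.sum_congr rfl fun k _ => (Finset.sum_mul _ _ _).symm
        · rw [Finset.mul_sum]
          refine Finset.sum_congr rfl fun k _ => ?_
          rw [← Finset.mul_sum, hblock1]
    _ ≤ β * (β * ∑ k : {x // x ∈ S}, U k 0)
        + β ^ 2 * ∑ k : {x // x ∈ S}, ∑ m ∈ Finset.Ico 1 (Mdeg k.1), U k m := by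
        refine add_le_add ?_ le_rfl
        refine mul_le_mul hα habs_s habs_s0 hβ0
    _ = β ^ 2 * ∑ k : {x // x ∈ S},
          (U k 0 + ∑ m ∈ Finset.Ico 1 (Mdeg k.1), U k m) := by
        rw [Finset.sum_add_distrib, mul_add]
        ring
    _ = β ^ 2 * ∑ x : Jt S, ‖u x‖ ^ 2 := by
        congr 1
        rw [← Finset.univ_sigma_univ, Finset.sum_sigma]
        exact (Finset.sum_congr rfl fun k _ => (hblock2 k)).symm


lemma norm_Kb_le (α γ : {x // x ∈ S} → ℂ) (β : ℝ) (hβ0 : 0 ≤ β)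
    (hM : ∀ k : {x // x ∈ S}, 0 < Mdeg k.1)
    (hα : ∑ k : {x // x ∈ S}, ‖α k‖ ^ 2 ≤ β)
    (hγ : ∑ k : {x // x ∈ S}, ‖γ k‖ ^ 2 ≤ β) :
    ‖(Kb S α γ β).submatrix (eqv S).symm (eqv S).symm‖ ≤ β := by
  rw [Matrix.l2_opNorm_def]
  refine ContinuousLinearMap.opNorm_le_bound _ hβ0 fun x => ?_
  set x' : It S → ℂ := (WithLp.equiv 2 (It S → ℂ)) x with hx'
  set u : Jt S → ℂ := fun c => x' (eqv S c) with hu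
  have hmv : ∀ r : It S,
      ((Kb S α γ β).submatrix (eqv S).symm (eqv S).symm *ᵥ x') r
        = (Kb S α γ β *ᵥ u) ((eqv S).symm r) := by
    intro r
    rw [Matrix.mulVec, Matrix.mulVec, dotProduct, dotProduct,
      ← Equiv.sum_comp ((eqv S).symm)
        (fun c' => Kb S α γ β ((eqv S).symm r) c' * u c')]
    refine Finset.sum_congr rfl fun c _ => ?_
    rw [Matrix.submatrix_apply, hu]
    simp
  have happ : ((Matrix.toEuclideanLin.trans LinearMap.toContinuousLinearMap)
        ((Kb S α γ β).submatrix (eqv S).symm (eqv S).symm)) x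
      = (WithLp.equiv 2 (It S → ℂ)).symm
          ((Kb S α γ β).submatrix (eqv S).symm (eqv S).symm *ᵥ x') := rfl
  rw [happ, EuclideanSpace.norm_eq, EuclideanSpace.norm_eq]
  have hL : ∑ r : It S, ‖(WithLp.equiv 2 (It S → ℂ)).symm
        ((Kb S α γ β).submatrix (eqv S).symm (eqv S).symm *ᵥ x') r‖ ^ 2
      = ∑ r' : Jt S, ‖(Kb S α γ β *ᵥ u) r'‖ ^ 2 := by
    rw [← Equiv.sum_comp ((eqv S).symm)
      (fun r' => ‖(Kb S α γ β *ᵥ u) r'‖ ^ 2)]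
    refine Finset.sum_congr rfl fun r _ => ?_
    rw [← hmv]; rfl
  have hR : ∑ i : It S, ‖x i‖ ^ 2 = ∑ c : Jt S, ‖u c‖ ^ 2 := by
    rw [← Equiv.sum_comp (eqv S) (fun i : It S => ‖x i‖ ^ 2)]
    refine Finset.sum_congr rfl fun c _ => ?_
    rw [hu]
    rfl
  rw [hL, hR]
  have hb := sum_sq_le S α γ β hβ0 hM hα hγ u
  calc Real.sqrt (∑ r' : Jt S, ‖(Kb S α γ β *ᵥ u) r'‖ ^ 2)
      ≤ Real.sqrt (β ^ 2 * ∑ c : Jt S, ‖u c‖ ^ 2) := Real.sqrt_le_sqrt hb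
    _ = β * Real.sqrt (∑ c : Jt S, ‖u c‖ ^ 2) := by
        rw [Real.sqrt_mul (sq_nonneg β), Real.sqrt_sq hβ0]

lemma det_submatrix (α γ : {x // x ∈ S} → ℂ) (β : ℝ) (z : Fin d → ℂ) :
    (1 - (Kb S α γ β).submatrix (eqv S).symm (eqv S).symm
      * Matrix.diagonal (fun x : It S => z x.1)).det
    = (1 - Kb S α γ β * Matrix.diagonal (fun x : Jt S => z (wv x.1.1 x.2))).det := by
  have hdiag : Matrix.diagonal (fun x : It S => z x.1)
      = (Matrix.diagonal (fun x : Jt S => z (wv x.1.1 x.2))).submatrix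
          (eqv S).symm (eqv S).symm := by
    ext x y
    by_cases h : x = y
    · subst h
      rw [Matrix.diagonal_apply_eq, Matrix.submatrix_apply, Matrix.diagonal_apply_eq]
      rw [← eqv_fst S ((eqv S).symm x), Equiv.apply_symm_apply]
    · rw [Matrix.diagonal_apply_ne _ h, Matrix.submatrix_apply, Matrix.diagonal_apply_ne]
      exact fun hc => h ((eqv S).symm.injective hc)
  have hsub : 1 - (Kb S α γ β).submatrix (eqv S).symm (eqv S).symm
      * Matrix.diagonal (fun x : It S => z x.1)
      = (1 - Kb S α γ β * Matrix.diagonal (fun x : Jt S => z (wv x.1.1 x.2))).submatrix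
          (eqv S).symm (eqv S).symm := by
    rw [hdiag, Matrix.submatrix_mul_equiv]
    ext x y
    simp only [Matrix.sub_apply, Matrix.submatrix_apply]
    congr 1
    rw [Matrix.one_apply, Matrix.one_apply]
    simp [Equiv.symm_apply_eq]
  rw [hsub, Matrix.det_submatrix_equiv_self]

end DetRepAux

open DetRepAux in
/-- Let `p(z) = 1 + ∑_{k ∈ S} p_k z^k` with `S ⊆ ℕ₀^d \ {0}` finite and all
`p_k ≠ 0`, let `t = tdeg p` and `β = (∑ |p_k|)^{1/(t+1)}`. If `β ≤ 1`, then
`p` admits a determinantal representation `p(z) = det (I - K Zₙ)` with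
`n = ∑_{k ∈ S} k` and `‖K‖ ≤ β`. -/
theorem determinantal_representation_norm_bound {d : ℕ}
    (S : Finset (Fin d → ℕ)) (hS : ∀ k ∈ S, k ≠ 0)
    (c : (Fin d → ℕ) → ℂ) (hc : ∀ k ∈ S, c k ≠ 0)
    (t : ℕ) (ht : S.sup (fun k => ∑ i, k i) = t)
    (β : ℝ) (hβ : β = (∑ k ∈ S, ‖c k‖) ^ ((1 : ℝ) / (t + 1)))
    (hβ1 : β ≤ 1) :
    ∃ K : Matrix ((i : Fin d) × Fin (∑ k ∈ S, k i)) ((i : Fin d) × Fin (∑ k ∈ S, k i)) ℂ,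
      ‖K‖ ≤ β ∧
      ∀ z : Fin d → ℂ,
        1 + ∑ k ∈ S, c k * ∏ i, z i ^ k i =
          (1 - K * Matrix.diagonal
            (fun x : (i : Fin d) × Fin (∑ k ∈ S, k i) => z x.1)).det := by
  classical
  by_cases hSe : S = ∅
  · subst hSe
    refine ⟨0, ?_, ?_⟩
    · rw [norm_zero, hβ]
      exact Real.rpow_nonneg (Finset.sum_nonneg fun k _ => norm_nonneg _) _
    · intro z
      haveI : IsEmpty ((i : Fin d) × Fin (∑ k ∈ (∅ : Finset (Fin d → ℕ)), k i)) := by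
        constructor
        rintro ⟨i, j⟩
        rw [Finset.sum_empty] at j
        exact j.elim0
      rw [Matrix.det_isEmpty]
      simp
  have hSne : S.Nonempty := Finset.nonempty_iff_ne_empty.mpr hSe
  have hM : ∀ k : {x // x ∈ S}, 0 < Mdeg k.1 := by
    rintro ⟨k, hk⟩
    have hk0 := hS k hk
    by_contra h
    push_neg at h
    apply hk0
    have h0 : ∑ i, k i = 0 := Nat.le_zero.mp h
    funext i
    exact Finset.sum_eq_zero_iff.mp h0 i (Finset.mem_univ i)
  have hMle : ∀ k : {x // x ∈ S}, Mdeg k.1 ≤ t := fun k => ht ▸ Finset.le_sup k.2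
  have ht1 : 1 ≤ t := le_trans (hM ⟨hSne.choose, hSne.choose_spec⟩)
    (hMle ⟨hSne.choose, hSne.choose_spec⟩)
  clear ht
  have hcsum_pos : 0 < ∑ k ∈ S, ‖c k‖ :=
    Finset.sum_pos (fun k hk => norm_pos_iff.mpr (hc k hk)) hSne
  have hβpos : 0 < β := by rw [hβ]; exact Real.rpow_pos_of_pos hcsum_pos _
  have hβ0 : 0 ≤ β := le_of_lt hβpos
  have hβpow : β ^ (t + 1) = ∑ k ∈ S, ‖c k‖ := by
    rw [hβ, ← Real.rpow_natCast ((∑ k ∈ S, ‖c k‖) ^ ((1 : ℝ) / (t + 1))) (t + 1),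
      ← Real.rpow_mul (le_of_lt hcsum_pos)]
    have h1 : ((1 : ℝ) / (t + 1)) * (((t + 1 : ℕ) : ℝ)) = 1 := by
      push_cast
      field_simp
    rw [h1, Real.rpow_one]
  set rr : {x // x ∈ S} → ℝ := fun k => ‖c k.1‖ / β ^ (Mdeg k.1 - 1) with hrr
  have hrr0 : ∀ k, 0 ≤ rr k := by
    intro k; simp only [hrr]; positivity
  have hrr_sum : ∑ k : {x // x ∈ S}, rr k ≤ β := by
    have h1 : ∀ k : {x // x ∈ S}, rr k ≤ ‖c k.1‖ / β ^ (t - 1) := by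
      intro k
      simp only [hrr]
      exact div_le_div_of_nonneg_left (norm_nonneg _) (pow_pos hβpos _)
        (pow_le_pow_of_le_one hβ0 hβ1 (by have := hMle k; omega))
    have h2 : ∑ k : {x // x ∈ S}, rr k
        ≤ ∑ k : {x // x ∈ S}, ‖c k.1‖ / β ^ (t - 1) :=
      Finset.sum_le_sum fun k _ => h1 k
    have h3 : ∑ k : {x // x ∈ S}, ‖c k.1‖ / β ^ (t - 1)
        = (∑ k ∈ S, ‖c k‖) / β ^ (t - 1) := by
      rw [← Finset.sum_div]
      congr 1
      exact Finset.sum_coe_sort S (fun k => ‖c k‖)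
    have h4 : (∑ k ∈ S, ‖c k‖) / β ^ (t - 1) = β ^ 2 := by
      rw [← hβpow]
      have : β ^ (t + 1) = β ^ (t - 1) * β ^ 2 := by
        rw [← pow_add]
        congr 1
        omega
      rw [this, mul_comm, mul_div_assoc, div_self (by positivity : β ^ (t-1) ≠ 0), mul_one]
    have h5 : β ^ 2 ≤ β := by
      nlinarith
    calc ∑ k : {x // x ∈ S}, rr k ≤ (∑ k ∈ S, ‖c k‖) / β ^ (t - 1) :=
          h2.trans_eq h3
      _ = β ^ 2 := h4
      _ ≤ β := h5
  set α' : {x // x ∈ S} → ℂ := fun k => (Real.sqrt (rr k) : ℂ) with hα'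
  set γ' : {x // x ∈ S} → ℂ :=
    fun k => -(c k.1 / (‖c k.1‖ : ℂ)) * (Real.sqrt (rr k) : ℂ) with hγ'
  have habs_c : ∀ k : {x // x ∈ S}, (‖c k.1‖ : ℂ) ≠ 0 := by
    intro k
    simp only [ne_eq, Complex.ofReal_eq_zero, norm_eq_zero]
    exact hc k.1 k.2
  have hsqrt : ∀ k, (Real.sqrt (rr k) : ℂ) * (Real.sqrt (rr k) : ℂ) = (rr k : ℂ) := by
    intro k
    rw [← Complex.ofReal_mul, Real.mul_self_sqrt (hrr0 k)]
  have hαγ : ∀ k : {x // x ∈ S},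
      α' k * γ' k * (β : ℂ) ^ (Mdeg k.1 - 1) = -(c k.1) := by
    intro k
    simp only [hα', hγ']
    have hβM : ((β : ℂ)) ^ (Mdeg k.1 - 1) = ((β ^ (Mdeg k.1 - 1) : ℝ) : ℂ) := by push_cast; rfl
    have hrrc : (rr k : ℂ) = (‖c k.1‖ : ℂ) / ((β ^ (Mdeg k.1 - 1) : ℝ) : ℂ) := by
      simp only [hrr]; push_cast; rfl
    calc (Real.sqrt (rr k) : ℂ) * (-(c k.1 / (‖c k.1‖ : ℂ))
          * (Real.sqrt (rr k) : ℂ)) * (β : ℂ) ^ (Mdeg k.1 - 1)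
        = -(c k.1 / (‖c k.1‖ : ℂ))
          * ((Real.sqrt (rr k) : ℂ) * (Real.sqrt (rr k) : ℂ)) * (β : ℂ) ^ (Mdeg k.1 - 1) := by
          ring
      _ = -(c k.1) := by
          rw [hsqrt k, hβM, hrrc]
          have hβMne : ((β ^ (Mdeg k.1 - 1) : ℝ) : ℂ) ≠ 0 := by
            simp only [ne_eq, Complex.ofReal_eq_zero]
            positivity
          field_simp
          rw [mul_div_assoc, div_self (habs_c k), mul_one]
  have habs_α : ∑ k : {x // x ∈ S}, ‖α' k‖ ^ 2 ≤ β := by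
    refine le_trans (le_of_eq ?_) hrr_sum
    refine Finset.sum_congr rfl fun k _ => ?_
    simp only [hα']
    rw [Complex.norm_real, Real.norm_of_nonneg (Real.sqrt_nonneg _), Real.sq_sqrt (hrr0 k)]
  have habs_γ : ∑ k : {x // x ∈ S}, ‖γ' k‖ ^ 2 ≤ β := by
    refine le_trans (le_of_eq ?_) hrr_sum
    refine Finset.sum_congr rfl fun k _ => ?_
    simp only [hγ']
    rw [norm_mul, norm_neg, norm_div, Complex.norm_real, norm_norm,
      div_self (by simpa using hc k.1 k.2), one_mul, Complex.norm_real,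
      Real.norm_of_nonneg (Real.sqrt_nonneg _), Real.sq_sqrt (hrr0 k)]
  refine ⟨(Kb S α' γ' β).submatrix (eqv S).symm (eqv S).symm, ?_, ?_⟩
  · exact norm_Kb_le S α' γ' β hβ0 hM habs_α habs_γ
  · intro z
    rw [det_submatrix, det_Kb S α' γ' β hM z]
    have : ∀ k : {x // x ∈ S},
        α' k * γ' k * (β : ℂ) ^ (Mdeg k.1 - 1) * ∏ i, z i ^ k.1 i
          = -(c k.1 * ∏ i, z i ^ k.1 i) := by
      intro k
      rw [hαγ k]
      ring
    rw [Finset.sum_congr rfl fun k _ => this k, Finset.sum_neg_distrib, sub_neg_eq_add]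
    congr 1
    exact (Finset.sum_coe_sort S (fun k => c k * ∏ i, z i ^ k i)).symm
end
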